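/- arXiv:2006.08503 — 5 statements merged into one kernel-verified Lean document; each statement's English description precedes it below -/
import Mathlib

section
/- For every odd integer n ≥ 1, g_n(0) = (1/n!) ∫_0^∞ e^{-y} y^n / cosh(y) dy = 2^{-n}(1 − 2^{-n}) ζ(n+1), where ζ is the Riemann zeta function. For every even integer n ≥ 2, g_n(0) = 0. -/
open MeasureTheory Real

/-- g_n(x) = (1/n!) ∫_0^∞ e^{-y} y^n (e^{xy} + (-1)^{n+1} e^{-xy}) / (e^y + (-1)^{n+1} e^{-y}) dy -/
noncomputable def gFun (n : ℕ) (x : ℝ) : ℝ :=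
  (1 / n.factorial) *
    ∫ y in Set.Ioi (0 : ℝ),
      Real.exp (-y) * y ^ n * (Real.exp (x * y) + (-1) ^ (n + 1) * Real.exp (-(x * y))) /
        (Real.exp y + (-1) ^ (n + 1) * Real.exp (-y))


lemma zeta_hasSum (m : ℕ) (hm : 2 ≤ m) :
    HasSum (fun k : ℕ ↦ 1 / (k : ℂ) ^ m) (riemannZeta m) := by
  have h1 : (1:ℝ) < ((m:ℂ)).re := by
    simp only [Complex.natCast_re]; exact_mod_cast hm.trans_lt' one_lt_two
  have H := LSeriesHasSum_one (s := (m:ℂ)) h1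
  have he : ∀ k : ℕ, LSeries.term 1 (m:ℂ) k = 1 / (k : ℂ) ^ m := by
    intro k
    rcases Nat.eq_zero_or_pos k with rfl | hk
    · simp [LSeries.term, zero_pow (by omega : m ≠ 0)]
    · rw [LSeries.term_of_ne_zero (by omega), Pi.one_apply, Complex.cpow_natCast]
  exact (funext he : _ = _) ▸ H

lemma eta_hasSum (m : ℕ) (hm : 2 ≤ m) :
    HasSum (fun k : ℕ ↦ (-1) ^ (k+1) / (k : ℂ) ^ m)
      ((1 - 2 / 2 ^ m) * riemannZeta m) := by
  have hz := zeta_hasSum m hm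
  have hinj : Function.Injective (fun j : ℕ ↦ 2 * j) := fun a b h ↦ by simpa using h
  have heven : HasSum (fun k : ℕ ↦ if Even k then 1 / (k : ℂ) ^ m else 0)
      ((1 / 2 ^ m) * riemannZeta m) := by
    rw [← hinj.hasSum_iff (fun k hk ↦ ?_)]
    · refine (hz.mul_left (1 / 2 ^ m)).congr_fun fun j ↦ ?_
      simp only [Function.comp_apply, if_pos (even_two_mul j)]
      rw [one_div_mul_one_div, Nat.cast_mul, mul_pow]
      norm_num
    · rw [if_neg]
      intro ⟨j, hj⟩
      exact hk ⟨j, by show 2 * j = k; omega⟩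
  have H := hz.sub (heven.mul_left 2)
  have : riemannZeta m - 2 * (1 / 2 ^ m * riemannZeta m)
      = (1 - 2 / 2 ^ m) * riemannZeta m := by ring
  rw [this] at H
  refine H.congr_fun fun k ↦ ?_
  rcases Nat.even_or_odd k with hk | hk
  · rw [if_pos hk, (hk.add_one).neg_one_pow]
    ring
  · rw [if_neg (by rw [Nat.not_even_iff_odd]; exact hk), Even.neg_one_pow hk.add_one]
    ring

lemma cosh_identity (t : ℝ) :
    rexp (-t) / Real.cosh t = 2 * rexp (-(2*t)) * (1 + rexp (-(2*t)))⁻¹ := by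
  have e : rexp (-(2*t)) = rexp (-t) * rexp (-t) := by rw [← Real.exp_add]; ring_nf
  have h1 : rexp t ≠ 0 := (Real.exp_pos t).ne'
  have h2 : (0:ℝ) < 1 + (rexp t)⁻¹ * (rexp t)⁻¹ := by positivity
  rw [Real.cosh_eq, e, Real.exp_neg]
  field_simp

lemma key_integral (n : ℕ) (hn : 1 ≤ n) (ho : Odd n) :
    ((∫ y in Set.Ioi (0:ℝ), rexp (-y) * y ^ n / Real.cosh y : ℝ) : ℂ)
      = (n.factorial : ℂ) * (2 ^ (-(n:ℤ)) * (1 - 2 ^ (-(n:ℤ))) * riemannZeta (n + 1)) := by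
  set m := n + 1 with hm
  have hm2 : 2 ≤ m := by omega
  set F : ℝ → ℂ := fun t ↦ ((rexp (-t) / Real.cosh t : ℝ) : ℂ) with hF
  have hs : (0:ℝ) < ((m:ℂ)).re := by simp [Complex.natCast_re]; omega
  have hp : ∀ k : ℕ, (2 * (-1:ℂ)^k = 0) ∨ (0:ℝ) < 2 * (k+1) := fun k ↦ Or.inr (by positivity)
  have hFsum : ∀ t ∈ Set.Ioi (0:ℝ), HasSum
      (fun k : ℕ ↦ (2 * (-1:ℂ)^k) * rexp (-(2 * (k+1)) * t)) (F t) := by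
    intro t ht
    have hx : ‖(-(rexp (-(2*t))) : ℂ)‖ < 1 := by
      rw [norm_neg, Complex.norm_real, Real.norm_eq_abs, abs_of_pos (Real.exp_pos _)]
      exact Real.exp_lt_one_iff.mpr (by simp only [Set.mem_Ioi] at ht; linarith)
    have H := (hasSum_geometric_of_norm_lt_one hx).mul_left (2 * (rexp (-(2*t)) : ℂ))
    have hsum_eq : F t = 2 * ((rexp (-(2*t)) : ℂ)) * (1 - (-(rexp (-(2*t)) : ℂ)))⁻¹ := by
      simp only [hF]
      rw [cosh_identity t]
      push_cast
      ring
    rw [← hsum_eq] at H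
    refine H.congr_fun fun k ↦ ?_
    have h1 : rexp (-(2*(k+1)) * t) = rexp (-(2*t)) * rexp (-(2*t)) ^ k := by
      rw [← Real.exp_nat_mul, ← Real.exp_add]
      ring_nf
    rw [h1, neg_pow]
    push_cast
    ring
  have hsummable : Summable fun k : ℕ ↦ ‖(2 * (-1:ℂ)^k)‖ / (2 * ((k:ℝ)+1)) ^ ((m:ℂ)).re := by
    have base : Summable fun k : ℕ ↦ (1:ℝ) / ((k:ℝ)+1) ^ m := by
      have := (Real.summable_one_div_nat_pow (p := m)).mpr hm2
      rw [← summable_nat_add_iff 1] at this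
      exact this.congr fun k ↦ by push_cast; ring_nf
    refine (base.mul_left (2 / 2 ^ m)).congr fun k ↦ ?_
    have hk1 : (0:ℝ) < (k:ℝ) + 1 := by positivity
    rw [div_mul_div_comm, mul_one, norm_mul, norm_pow, norm_neg, norm_one, one_pow, mul_one,
      Complex.norm_ofNat, Complex.natCast_re, Real.rpow_natCast, mul_pow]
  have H := hasSum_mellin (F := F) (s := (m:ℂ)) (a := fun k : ℕ ↦ 2 * (-1:ℂ)^k)
    (p := fun k : ℕ ↦ 2 * ((k:ℝ)+1)) hp hs hFsum hsummable
  have E := eta_hasSum m hm2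
  rw [← hasSum_nat_add_iff' 1] at E
  rw [Finset.range_one, Finset.sum_singleton, Nat.cast_zero,
    zero_pow (by omega : m ≠ 0), div_zero, sub_zero] at E
  have E2 := E.mul_left ((n.factorial : ℂ) * 2 / 2 ^ m)
  have hfun : ∀ k : ℕ,
      ((n.factorial : ℂ) * 2 / 2 ^ m) * ((-1) ^ (k + 1 + 1) / ((k + 1 : ℕ) : ℂ) ^ m)
        = Complex.Gamma (m:ℂ) * (2 * (-1:ℂ) ^ k) / ((2 * ((k:ℝ)+1) : ℝ) : ℂ) ^ (m:ℂ) := by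
    intro k
    have hg : Complex.Gamma (m:ℂ) = (n.factorial : ℂ) := by
      rw [hm]; push_cast; exact Complex.Gamma_nat_eq_factorial n
    have hc : (((2 * ((k:ℝ)+1) : ℝ)) : ℂ) ^ (m:ℂ) = 2 ^ m * ((k:ℂ) + 1) ^ m := by
      rw [Complex.cpow_natCast]; push_cast; rw [mul_pow]
    rw [hg, hc, pow_succ, pow_succ]
    have h2 : ((2:ℂ)) ^ m ≠ 0 := pow_ne_zero _ two_ne_zero
    have hk0 : ((k:ℂ) + 1) ≠ 0 := by exact_mod_cast (Nat.succ_ne_zero k)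
    have hk : ((k:ℂ) + 1) ^ m ≠ 0 := pow_ne_zero _ hk0
    push_cast
    field_simp
    ring
  have E3 := E2.congr_fun fun k ↦ (hfun k).symm
  have hval := H.unique E3
  have hInt : ((∫ y in Set.Ioi (0:ℝ), rexp (-y) * y ^ n / Real.cosh y : ℝ) : ℂ)
      = mellin F (m:ℂ) := by
    have h0 : (∫ t in Set.Ioi (0:ℝ), ((rexp (-t) * t ^ n / Real.cosh t : ℝ) : ℂ))
        = ((∫ y in Set.Ioi (0:ℝ), rexp (-y) * y ^ n / Real.cosh y : ℝ) : ℂ) :=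
      integral_ofReal
    rw [mellin, ← h0]
    refine setIntegral_congr_fun measurableSet_Ioi (fun t ht ↦ ?_)
    have hcast : ((m:ℂ) - 1) = ((n:ℕ):ℂ) := by rw [hm]; push_cast; ring
    rw [hcast, Complex.cpow_natCast]
    simp only [hF, smul_eq_mul]
    push_cast
    ring
  rw [hInt, hval]
  have h2 : ((2:ℂ)) ^ (-(n:ℤ)) = 2 / 2 ^ m := by
    rw [hm, zpow_neg, zpow_natCast, pow_succ]
    field_simp
  rw [h2]
  have hz : riemannZeta ((m:ℕ):ℂ) = riemannZeta ((n:ℂ) + 1) := by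
    rw [hm]; push_cast; ring_nf
  rw [hz]
  ring

/-- for n ≥ 1 odd, g_n(0) = (1/n!)∫_0^∞ e^{-y} y^n / cosh y dy
    = 2^{-n}(1 − 2^{-n}) ζ(n+1); for n even, g_n(0) = 0. -/
theorem gFun_at_zero (n : ℕ) (hn : 1 ≤ n) :
    (Odd n →
      gFun n 0 = (1 / n.factorial) * ∫ y in Set.Ioi (0 : ℝ), Real.exp (-y) * y ^ n / Real.cosh y ∧
      (gFun n 0 : ℂ) = 2 ^ (-(n : ℤ)) * (1 - 2 ^ (-(n : ℤ))) * riemannZeta (n + 1)) ∧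
    (Even n → gFun n 0 = 0) := by
  constructor
  · intro ho
    have hodd : ((-1:ℝ)) ^ (n+1) = 1 := Even.neg_one_pow ho.add_one
    have hi : ∀ y : ℝ,
        Real.exp (-y) * y ^ n * (Real.exp ((0:ℝ) * y) + (-1) ^ (n + 1) * Real.exp (-((0:ℝ) * y))) /
          (Real.exp y + (-1) ^ (n + 1) * Real.exp (-y))
        = Real.exp (-y) * y ^ n / Real.cosh y := by
      intro y
      rw [hodd, Real.cosh_eq]
      simp only [zero_mul, neg_zero, Real.exp_zero, one_mul]
      rw [div_div_eq_mul_div]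
      ring_nf
    have part1 : gFun n 0 =
        (1 / n.factorial) * ∫ y in Set.Ioi (0 : ℝ), Real.exp (-y) * y ^ n / Real.cosh y := by
      unfold gFun
      congr 1
      exact setIntegral_congr_fun measurableSet_Ioi fun y _ ↦ hi y
    refine ⟨part1, ?_⟩
    have h2 := key_integral n hn ho
    rw [part1]
    push_cast
    rw [h2]
    have hne : ((n.factorial : ℂ)) ≠ 0 := Nat.cast_ne_zero.mpr n.factorial_ne_zero
    field_simp
  · intro he
    have hodd : ((-1:ℝ)) ^ (n+1) = -1 := Odd.neg_one_pow he.add_one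
    have hi : ∀ y : ℝ,
        Real.exp (-y) * y ^ n * (Real.exp ((0:ℝ) * y) + (-1) ^ (n + 1) * Real.exp (-((0:ℝ) * y))) /
          (Real.exp y + (-1) ^ (n + 1) * Real.exp (-y))
        = 0 := by
      intro y
      rw [hodd]
      simp
    unfold gFun
    rw [setIntegral_congr_fun measurableSet_Ioi fun y _ ↦ hi y]
    simp
end

section
/- For each integer n ≥ 1, the series C_n = Σ_{m=2}^∞ Λ(m)² / (m (log m)^{2n+2}) converges, and satisfies 1/(2(log 2)^{2n}) ≤ C_n ≤ 1/(2(log 2)^{2n}) + A/(log 3)^{2n} for some universal constant A > 0 independent of n. Consequently C_n → ∞ as n → ∞ and C_n ∼ 1/(2(log 2)^{2n}). -/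
open Filter

/-- The m-th term of C_n (vanishes for m = 0, 1 since Λ(m) = 0 there). -/
noncomputable def Cterm (n m : ℕ) : ℝ :=
  (ArithmeticFunction.vonMangoldt m) ^ 2 / (m * Real.log m ^ (2 * n + 2))

/-- C_n = Σ_{m=2}^∞ Λ(m)²/(m (log m)^{2n+2}). -/
noncomputable def Cseries (n : ℕ) : ℝ := ∑' m : ℕ, Cterm n m

noncomputable def myGs (m : ℕ) : ℝ := 1 / ((m + 3) * Real.log (m + 3) ^ 2)

lemma log3_gt_one : 1 < Real.log 3 := by
  rw [Real.lt_log_iff_exp_lt (by norm_num)]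
  calc Real.exp 1 < 2.7182818286 := Real.exp_one_lt_d9
    _ < 3 := by norm_num

lemma log2_pos : 0 < Real.log 2 := Real.log_pos (by norm_num)

lemma log2_lt_one : Real.log 2 < 1 := by
  calc Real.log 2 < Real.log (Real.exp 1) :=
        Real.log_lt_log (by norm_num) (lt_trans (by norm_num) Real.exp_one_gt_d9)
    _ = 1 := Real.log_exp 1

lemma myGs_nonneg (m : ℕ) : 0 ≤ myGs m := by
  unfold myGs
  positivity

lemma telescope_aux (m : ℕ) :
    myGs m ≤ 1 / Real.log (m + 2) - 1 / Real.log (m + 3) := by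
  set x : ℝ := (m : ℝ) + 2 with hx
  have hx2 : (2:ℝ) ≤ x := by simp [hx]
  have hxpos : 0 < x := by linarith
  set a := Real.log x with ha
  set b := Real.log (x + 1) with hb
  have ha0 : 0 < a := Real.log_pos (by linarith)
  have hab : a < b := Real.log_lt_log hxpos (by linarith)
  have hb0 : 0 < b := lt_trans ha0 hab
  -- b - a ≥ 1/(x+1)
  have hkey : 1 / (x + 1) ≤ b - a := by
    have h1 : Real.log (x / (x + 1)) ≤ x / (x + 1) - 1 :=
      Real.log_le_sub_one_of_pos (by positivity)
    have h2 : Real.log (x / (x + 1)) = a - b := by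
      rw [Real.log_div (by linarith) (by linarith)]
    have h3 : x / (x + 1) - 1 = -(1 / (x + 1)) := by
      field_simp
      ring
    rw [h2, h3] at h1
    linarith
  have hmain : 1 / ((x + 1) * b ^ 2) ≤ (b - a) / (a * b) := by
    have : 1 / ((x + 1) * b ^ 2) = (1 / (x + 1)) / (b * b) := by
      rw [div_div, sq]
    rw [this]
    exact div_le_div₀ (by linarith) hkey (by positivity)
      (by nlinarith)
  have heq : (b - a) / (a * b) = 1 / a - 1 / b := by
    field_simp
  have hgs : myGs m = 1 / ((x + 1) * b ^ 2) := by
    unfold myGs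
    have : (m : ℝ) + 3 = x + 1 := by rw [hx]; ring
    rw [this]
  have h3 : (m : ℝ) + 3 = x + 1 := by rw [hx]; ring
  rw [hgs, h3, ← hb]
  linarith [hmain, heq.le]

lemma summable_myGs : Summable myGs := by
  apply summable_of_sum_range_le (c := 1 / Real.log 2) (fun m => myGs_nonneg m)
  intro n
  have := Finset.sum_range_sub' (fun i => 1 / Real.log ((i : ℝ) + 2)) n
  calc ∑ i ∈ Finset.range n, myGs i
      ≤ ∑ i ∈ Finset.range n, (1 / Real.log ((i : ℝ) + 2) - 1 / Real.log ((i : ℝ) + 3)) := by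
        apply Finset.sum_le_sum
        intro i _
        have := telescope_aux i
        simpa using this
    _ = 1 / Real.log ((0:ℕ) + 2) - 1 / Real.log ((n : ℝ) + 2) := by
        rw [← this]
        apply Finset.sum_congr rfl
        intro i _
        push_cast
        ring_nf
    _ ≤ 1 / Real.log 2 := by
        have h1 : 0 ≤ 1 / Real.log ((n : ℝ) + 2) := by
          have : (0:ℝ) ≤ Real.log ((n : ℝ) + 2) := Real.log_nonneg (by have := Nat.cast_nonneg (α := ℝ) n; linarith)
          exact one_div_nonneg.mpr this
        have h0 : Real.log (((0:ℕ):ℝ) + 2) = Real.log 2 := by norm_num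
        rw [h0]
        linarith

lemma log_nat_nonneg (m : ℕ) : 0 ≤ Real.log m := by
  rcases Nat.eq_zero_or_pos m with h | h
  · simp [h]
  · exact Real.log_nonneg (by exact_mod_cast h)

lemma Cterm_nonneg (n m : ℕ) : 0 ≤ Cterm n m := by
  unfold Cterm
  apply div_nonneg (by positivity)
  apply mul_nonneg (by positivity)
  exact pow_nonneg (log_nat_nonneg m) _

lemma Cterm_zero (n : ℕ) : Cterm n 0 = 0 := by
  unfold Cterm; simp

lemma Cterm_one (n : ℕ) : Cterm n 1 = 0 := by
  unfold Cterm; simp [ArithmeticFunction.vonMangoldt_apply_one]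

lemma Cterm_two (n : ℕ) : Cterm n 2 = 1 / (2 * Real.log 2 ^ (2 * n)) := by
  unfold Cterm
  rw [show ((2:ℕ):ℝ) = (2:ℝ) by norm_num,
    ArithmeticFunction.vonMangoldt_apply_prime Nat.prime_two]
  rw [pow_add]
  have h := log2_pos
  field_simp
  ring

lemma Cterm_le (k m : ℕ) :
    Cterm (k + 1) (m + 3) ≤ (1 / Real.log 3 ^ (2 * k)) * myGs m := by
  have hl3 := log3_gt_one
  set M : ℝ := (m : ℝ) + 3 with hM
  have hM3 : (3:ℝ) ≤ M := by simp [hM]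
  have hMpos : 0 < M := by linarith
  set L := Real.log M with hL
  have hLge : Real.log 3 ≤ L := Real.log_le_log (by norm_num) hM3
  have hL1 : 1 < L := lt_of_lt_of_le hl3 hLge
  have hLpos : 0 < L := by linarith
  have hΛ : ArithmeticFunction.vonMangoldt (m + 3) ≤ L := by
    have := ArithmeticFunction.vonMangoldt_le_log (n := m + 3)
    rw [hL, hM]; push_cast at this ⊢; exact this
  have hΛ0 : 0 ≤ ArithmeticFunction.vonMangoldt (m + 3) :=
    ArithmeticFunction.vonMangoldt_nonneg
  have hcast : ((m + 3 : ℕ) : ℝ) = M := by push_cast [hM]; ring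
  have step1 : Cterm (k + 1) (m + 3) ≤ L ^ 2 / (M * L ^ (2 * k + 4)) := by
    unfold Cterm
    rw [hcast, show 2 * (k + 1) + 2 = 2 * k + 4 from by ring]
    apply div_le_div_of_nonneg_right ?_ (by positivity)
    · exact pow_le_pow_left₀ hΛ0 hΛ 2
  have step2 : L ^ 2 / (M * L ^ (2 * k + 4)) = 1 / (M * L ^ (2 * k + 2)) := by
    rw [show 2 * k + 4 = (2 * k + 2) + 2 from by ring, pow_add]
    field_simp
  have step3 : 1 / (M * L ^ (2 * k + 2)) ≤ 1 / (Real.log 3 ^ (2 * k) * (M * L ^ 2)) := by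
    apply one_div_le_one_div_of_le (by positivity)
    rw [pow_add]
    calc Real.log 3 ^ (2 * k) * (M * L ^ 2) ≤ L ^ (2 * k) * (M * L ^ 2) := by
          apply mul_le_mul_of_nonneg_right _ (by positivity)
          exact pow_le_pow_left₀ (by linarith) hLge _
      _ = M * (L ^ (2 * k) * L ^ 2) := by ring
  have step4 : 1 / (Real.log 3 ^ (2 * k) * (M * L ^ 2)) =
      (1 / Real.log 3 ^ (2 * k)) * myGs m := by
    unfold myGs
    rw [← hM, ← hL]
    rw [div_mul_div_comm]
    ring_nf
  calc Cterm (k + 1) (m + 3) ≤ L ^ 2 / (M * L ^ (2 * k + 4)) := step1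
    _ = 1 / (M * L ^ (2 * k + 2)) := step2
    _ ≤ 1 / (Real.log 3 ^ (2 * k) * (M * L ^ 2)) := step3
    _ = (1 / Real.log 3 ^ (2 * k)) * myGs m := step4

lemma summable_Cterm (k : ℕ) : Summable (Cterm (k + 1)) := by
  rw [← summable_nat_add_iff 3]
  apply Summable.of_nonneg_of_le (fun m => Cterm_nonneg _ _) (fun m => Cterm_le k m)
  exact (summable_myGs.mul_left _)

lemma Cseries_eq (k : ℕ) :
    Cseries (k + 1) = 1 / (2 * Real.log 2 ^ (2 * (k + 1)))
      + ∑' m, Cterm (k + 1) (m + 3) := by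
  have h := Summable.sum_add_tsum_nat_add 3 (summable_Cterm k)
  rw [Cseries, ← h]
  congr 1
  rw [Finset.sum_range_succ, Finset.sum_range_succ, Finset.sum_range_one,
    Cterm_zero, Cterm_one, Cterm_two]
  ring

/-- for each n ≥ 1 the series C_n converges, satisfies
    1/(2(log 2)^{2n}) ≤ C_n ≤ 1/(2(log 2)^{2n}) + A/(log 3)^{2n} for a universal A > 0,
    and consequently C_n → ∞ and C_n ∼ 1/(2(log 2)^{2n}). -/
theorem Cseries_properties :
    (∀ n : ℕ, 1 ≤ n → Summable (Cterm n)) ∧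
    (∃ A > 0, ∀ n : ℕ, 1 ≤ n →
      1 / (2 * Real.log 2 ^ (2 * n)) ≤ Cseries n ∧
      Cseries n ≤ 1 / (2 * Real.log 2 ^ (2 * n)) + A / Real.log 3 ^ (2 * n)) ∧
    Tendsto Cseries atTop atTop ∧
    Tendsto (fun n => Cseries n * (2 * Real.log 2 ^ (2 * n))) atTop (nhds 1) := by
  have hl3 := log3_gt_one
  have hl2 := log2_pos
  have hl21 := log2_lt_one
  have hl23 : Real.log 2 < Real.log 3 := Real.log_lt_log (by norm_num) (by norm_num)
  set B := ∑' m, myGs m with hB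
  have hB0 : 0 ≤ B := tsum_nonneg myGs_nonneg
  set A := B * Real.log 3 ^ 2 + 1 with hA
  have hA0 : 0 < A := by positivity
  -- summability
  have hsum : ∀ n : ℕ, 1 ≤ n → Summable (Cterm n) := by
    intro n hn
    obtain ⟨k, rfl⟩ := Nat.exists_eq_add_of_le hn
    rw [add_comm]
    exact summable_Cterm k
  -- bounds
  have hbounds : ∀ n : ℕ, 1 ≤ n →
      1 / (2 * Real.log 2 ^ (2 * n)) ≤ Cseries n ∧
      Cseries n ≤ 1 / (2 * Real.log 2 ^ (2 * n)) + A / Real.log 3 ^ (2 * n) := by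
    intro n hn
    obtain ⟨k, rfl⟩ := Nat.exists_eq_add_of_le hn
    rw [add_comm 1 k]
    have heq := Cseries_eq k
    have hT0 : 0 ≤ ∑' m, Cterm (k + 1) (m + 3) :=
      tsum_nonneg fun m => Cterm_nonneg _ _
    have hTsum : Summable (fun m => Cterm (k + 1) (m + 3)) :=
      (summable_Cterm k).comp_injective (add_left_injective 3)
    have hTle : ∑' m, Cterm (k + 1) (m + 3) ≤ (1 / Real.log 3 ^ (2 * k)) * B := by
      rw [hB, ← tsum_mul_left]
      exact Summable.tsum_le_tsum (fun m => Cterm_le k m) hTsum (summable_myGs.mul_left _)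
    have hfinal : (1 / Real.log 3 ^ (2 * k)) * B ≤ A / Real.log 3 ^ (2 * (k + 1)) := by
      rw [show 2 * (k + 1) = 2 * k + 2 from by ring, pow_add, hA,
        one_div, inv_mul_eq_div, div_le_div_iff₀ (by positivity) (by positivity)]
      nlinarith [pow_pos (show (0:ℝ) < Real.log 3 by linarith) (2 * k)]
    constructor
    · rw [heq]; linarith
    · rw [heq]; linarith
  refine ⟨hsum, ⟨A, hA0, hbounds⟩, ?_, ?_⟩
  · -- tendsto atTop
    have hbase : Tendsto (fun n : ℕ => 1 / (2 * Real.log 2 ^ (2 * n))) atTop atTop := by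
      have heq : (fun n : ℕ => 1 / (2 * Real.log 2 ^ (2 * n)))
          = fun n : ℕ => (1 / 2) * ((Real.log 2 ^ 2)⁻¹) ^ n := by
        funext n
        rw [pow_mul, ← inv_pow]
        field_simp
        rw [← mul_pow, mul_one_div_cancel (by positivity), one_pow]
      rw [heq]
      apply Tendsto.const_mul_atTop (by norm_num)
      apply tendsto_pow_atTop_atTop_of_one_lt
      rw [one_lt_inv_iff₀]
      constructor
      · positivity
      · nlinarith
    apply tendsto_atTop_mono' atTop _ hbase
    filter_upwards [eventually_ge_atTop 1] with n hn
    exact (hbounds n hn).1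
  · -- tendsto ratio → 1
    set r := Real.log 2 ^ 2 / Real.log 3 ^ 2 with hr
    have hr0 : 0 ≤ r := by positivity
    have hr1 : r < 1 := by
      rw [hr, div_lt_one (by positivity)]
      nlinarith
    have hupper : Tendsto (fun n : ℕ => 1 + 2 * A * r ^ n) atTop (nhds 1) := by
      have := (tendsto_pow_atTop_nhds_zero_of_lt_one hr0 hr1).const_mul (2 * A)
      have h2 := this.const_add 1
      simpa using h2
    apply tendsto_of_tendsto_of_tendsto_of_le_of_le' tendsto_const_nhds hupper
    · filter_upwards [eventually_ge_atTop 1] with n hn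
      have h := (hbounds n hn).1
      have hpos : 0 < 2 * Real.log 2 ^ (2 * n) := by positivity
      calc (1:ℝ) = (1 / (2 * Real.log 2 ^ (2 * n))) * (2 * Real.log 2 ^ (2 * n)) := by
            field_simp
        _ ≤ Cseries n * (2 * Real.log 2 ^ (2 * n)) :=
            mul_le_mul_of_nonneg_right h hpos.le
    · filter_upwards [eventually_ge_atTop 1] with n hn
      have h := (hbounds n hn).2
      have hpos : 0 < 2 * Real.log 2 ^ (2 * n) := by positivity
      have key : (1 / (2 * Real.log 2 ^ (2 * n)) + A / Real.log 3 ^ (2 * n))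
          * (2 * Real.log 2 ^ (2 * n)) = 1 + 2 * A * r ^ n := by
        rw [hr, div_pow, ← pow_mul, ← pow_mul]
        field_simp
      calc Cseries n * (2 * Real.log 2 ^ (2 * n))
          ≤ (1 / (2 * Real.log 2 ^ (2 * n)) + A / Real.log 3 ^ (2 * n))
            * (2 * Real.log 2 ^ (2 * n)) := mul_le_mul_of_nonneg_right h hpos.le
        _ = 1 + 2 * A * r ^ n := key
end

section
/- For every integer m ≥ 2, the sum Σ_{k ≥ 2, k ≠ m} 1/(k² |log(m/k)|) is bounded by a constant independent of m. -/
lemma ptwise (m k : ℕ) (hm : 2 ≤ m) (hk : 2 ≤ k) (hkm : k ≠ m) :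
    1 / ((k : ℝ) ^ 2 * |Real.log ((m : ℝ) / k)|)
      ≤ 2 / (k : ℝ) ^ 2 + 1 / ((k : ℝ) - m) ^ 2 := by
  have hK : (2:ℝ) ≤ (k:ℝ) := by exact_mod_cast hk
  have hM : (2:ℝ) ≤ (m:ℝ) := by exact_mod_cast hm
  have hKpos : (0:ℝ) < k := by linarith
  have hMpos : (0:ℝ) < m := by linarith
  have hlogmk : Real.log ((m:ℝ)/k) = Real.log m - Real.log k :=
    Real.log_div (by positivity) (by positivity)
  have h1 : 1 - (k:ℝ)/m ≤ Real.log ((m:ℝ)/k) := by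
    have := Real.log_le_sub_one_of_pos (show (0:ℝ) < (k:ℝ)/m by positivity)
    rw [Real.log_div (by positivity) (by positivity)] at this
    linarith [hlogmk]
  have h2 : 1 - (m:ℝ)/k ≤ -Real.log ((m:ℝ)/k) := by
    have := Real.log_le_sub_one_of_pos (show (0:ℝ) < (m:ℝ)/k by positivity)
    rw [Real.log_div (by positivity) (by positivity)] at this
    linarith [hlogmk]
  rcases lt_or_gt_of_ne (fun h : (k:ℝ) = m => hkm (by exact_mod_cast h)) with hlt | hgt
  · -- k < m
    have hb : (0:ℝ) < (m:ℝ) - k := by linarith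
    have hlog : ((m:ℝ) - k)/m ≤ |Real.log ((m:ℝ)/k)| := by
      refine le_trans ?_ (le_abs_self _)
      have : ((m:ℝ) - k)/m = 1 - (k:ℝ)/m := by field_simp
      linarith [h1, this.le, this.ge]
    have hlogpos : (0:ℝ) < ((m:ℝ) - k)/m := by positivity
    have step1 : 1 / ((k : ℝ) ^ 2 * |Real.log ((m : ℝ) / k)|)
        ≤ 1 / ((k:ℝ)^2 * (((m:ℝ) - k)/m)) := by
      apply one_div_le_one_div_of_le (by positivity)
      exact mul_le_mul_of_nonneg_left hlog (by positivity)
    refine step1.trans ?_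
    rw [show (k:ℝ)^2 * (((m:ℝ) - k)/m) = (k:ℝ)^2*((m:ℝ)-k)/m from by ring, one_div_div,
      show ((k:ℝ) - m)^2 = ((m:ℝ) - k)^2 from by ring,
      div_add_div _ _ (by positivity) (by positivity),
      div_le_div_iff₀ (by positivity) (by positivity)]
    nlinarith [sq_nonneg (2*(k:ℝ) - m), mul_pos hKpos hb,
      mul_pos (mul_pos hKpos hKpos) hb, sq_nonneg ((k:ℝ)*((m:ℝ)-k))]
  · -- k > m
    have hb : (0:ℝ) < (k:ℝ) - m := by linarith
    have hlog : ((k:ℝ) - m)/k ≤ |Real.log ((m:ℝ)/k)| := by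
      refine le_trans ?_ (neg_le_abs _)
      have : ((k:ℝ) - m)/k = 1 - (m:ℝ)/k := by field_simp
      linarith [h2, this.le]
    have hlogpos : (0:ℝ) < ((k:ℝ) - m)/k := by positivity
    have step1 : 1 / ((k : ℝ) ^ 2 * |Real.log ((m : ℝ) / k)|)
        ≤ 1 / ((k:ℝ)^2 * (((k:ℝ) - m)/k)) := by
      apply one_div_le_one_div_of_le (by positivity)
      exact mul_le_mul_of_nonneg_left hlog (by positivity)
    refine step1.trans ?_
    rw [show (k:ℝ)^2 * (((k:ℝ) - m)/k) = (k:ℝ)^2*((k:ℝ)-m)/k from by ring, one_div_div,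
      div_add_div _ _ (by positivity) (by positivity),
      div_le_div_iff₀ (by positivity) (by positivity)]
    have key : (k:ℝ)*((k:ℝ)-m) ≤ 2*((k:ℝ)-m)^2 + (k:ℝ)^2 := by
      nlinarith [sq_nonneg ((k:ℝ)-m), sq_nonneg ((m:ℝ))]
    nlinarith [mul_le_mul_of_nonneg_right key
      (mul_nonneg (sq_nonneg ((k:ℝ))) hb.le)]

/-- Σ_{k ≥ 2, k ≠ m} 1/(k² |log(m/k)|) is bounded uniformly in m ≥ 2. -/
theorem sum_inv_sq_log_bounded :
    ∃ C : ℝ, ∀ m : ℕ, 2 ≤ m →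
      (∑' k : ℕ, if 2 ≤ k ∧ k ≠ m then
          1 / (k ^ 2 * |Real.log ((m : ℝ) / k)|) else 0) ≤ C := by
  refine ⟨2 * (∑' k : ℕ, 1/(k:ℝ)^2) + ∑' n : ℤ, 1/(n:ℝ)^2, ?_⟩
  intro m hm
  set g : ℕ → ℝ := fun k => 2/(k:ℝ)^2 + 1/((k:ℝ) - m)^2 with hgdef
  have hg2 : Summable (fun k : ℕ => 2/(k:ℝ)^2) := by
    simpa [div_eq_mul_inv] using (Real.summable_one_div_nat_pow.mpr one_lt_two).mul_left 2
  have hF : Summable (fun n : ℤ => 1/(n:ℝ)^2) :=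
    Real.summable_one_div_int_pow.mpr one_lt_two
  have hinj : Function.Injective (fun k : ℕ => (k:ℤ) - m) := by
    intro a b h; simp only at h; omega
  have hcast : ∀ k : ℕ, ((((k:ℤ) - m) : ℤ) : ℝ) = (k:ℝ) - m := by
    intro k; push_cast; ring
  have hgm : Summable (fun k : ℕ => 1/((k:ℝ) - m)^2) := by
    have := hF.comp_injective hinj
    refine this.congr fun k => ?_
    simp only [Function.comp]; rw [hcast]
  have hg : Summable g := hg2.add hgm
  have hfg : ∀ k : ℕ, (if 2 ≤ k ∧ k ≠ m then
      1 / ((k:ℝ) ^ 2 * |Real.log ((m : ℝ) / k)|) else 0) ≤ g k := by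
    intro k
    split
    · next h => exact ptwise m k hm h.1 h.2
    · positivity
  have hf0 : ∀ k : ℕ, 0 ≤ (if 2 ≤ k ∧ k ≠ m then
      1 / ((k:ℝ) ^ 2 * |Real.log ((m : ℝ) / k)|) else 0) := by
    intro k; split <;> positivity
  have hf : Summable (fun k : ℕ => if 2 ≤ k ∧ k ≠ m then
      1 / ((k:ℝ) ^ 2 * |Real.log ((m : ℝ) / k)|) else 0) :=
    Summable.of_nonneg_of_le hf0 hfg hg
  calc (∑' k : ℕ, if 2 ≤ k ∧ k ≠ m then
          1 / ((k:ℝ) ^ 2 * |Real.log ((m : ℝ) / k)|) else 0)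
      ≤ ∑' k : ℕ, g k := hf.tsum_le_tsum hfg hg
    _ = (∑' k : ℕ, 2/(k:ℝ)^2) + ∑' k : ℕ, 1/((k:ℝ) - m)^2 := hg2.tsum_add hgm
    _ ≤ 2 * (∑' k : ℕ, 1/(k:ℝ)^2) + ∑' n : ℤ, 1/(n:ℝ)^2 := by
        gcongr ?_ + ?_
        · rw [← tsum_mul_left]
          exact le_of_eq (tsum_congr fun k => by rw [mul_one_div])
        · refine Summable.tsum_le_tsum_of_inj (fun k : ℕ => (k:ℤ) - m) hinj
            (fun c _ => by positivity) (fun k => ?_) hgm hF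
          rw [hcast]
end

section
/- Let m ≥ 2 be an integer, σ ≥ 2 real, and T > 0. Then ∫_0^T log ζ(σ + it) (m^{it} + (−1)^{n+1} m^{−it}) dt = (Λ(m)/(m^σ log m)) T + O(2^{−σ}), where the implied constant is absolute (independent of m, σ, T, n). -/
open MeasureTheory Complex Finset
namespace LZT

noncomputable def rr (sg : ℝ) (k : ℕ) : ℝ :=
  ArithmeticFunction.vonMangoldt k * (k : ℝ) ^ (-sg) / Real.log k




noncomputable def maj (k : ℕ) : ℝ := if k < 2 then 0 else (((k:ℝ))^2)⁻¹

lemma maj_nonneg (k : ℕ) : 0 ≤ maj k := by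
  unfold maj; split <;> positivity

lemma inv_sq_step (x : ℝ) (hx : 0 ≤ x) : ((x+2)^2)⁻¹ ≤ (x+1)⁻¹ - (x+2)⁻¹ := by
  have heq : (x+1)⁻¹ - (x+2)⁻¹ = ((x+1)*(x+2))⁻¹ := by
    field_simp; ring
  rw [heq]
  have h1 : (0:ℝ) < (x+1)*(x+2) := by positivity
  have h2 : (x+1)*(x+2) ≤ (x+2)^2 := by nlinarith
  exact inv_anti₀ h1 h2

lemma H1 (L : ℕ) : ∑ j ∈ range L, (((j:ℝ)+1)^2)⁻¹ ≤ 2 := by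
  have key : ∀ M : ℕ, ∑ j ∈ range (M+1), (((j:ℝ)+1)^2)⁻¹ ≤ 2 - ((M:ℝ)+1)⁻¹ := by
    intro M
    induction M with
    | zero => simp; norm_num
    | succ M ih =>
        rw [Finset.sum_range_succ]
        have key2 := inv_sq_step (M:ℝ) (by positivity)
        push_cast
        push_cast at ih
        rw [show ((M:ℝ)+1+1) = (M:ℝ)+2 from by ring]
        linarith
  cases L with
  | zero => simp
  | succ M =>
      have h : (0:ℝ) ≤ ((M:ℝ)+1)⁻¹ := by positivity
      linarith [key M]

lemma sum_maj (N : ℕ) : ∑ k ∈ range N, maj k ≤ 1 := by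
  have key : ∀ M : ℕ, ∑ k ∈ range (M+2), maj k ≤ 1 - ((M:ℝ)+1)⁻¹ := by
    intro M
    induction M with
    | zero => simp [Finset.sum_range_succ, maj]
    | succ M ih =>
        rw [show M+1+2 = (M+2)+1 by ring, Finset.sum_range_succ]
        have hmaj : maj (M+2) = (((M:ℝ)+2)^2)⁻¹ := by
          simp only [maj, if_neg (by omega : ¬ (M+2 < 2))]; push_cast; ring_nf
        have key2 := inv_sq_step (M:ℝ) (by positivity)
        rw [hmaj]
        push_cast
        push_cast at ih
        rw [show ((M:ℝ)+1+1) = (M:ℝ)+2 from by ring]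
        linarith
  rcases Nat.lt_or_ge N 2 with h | h
  · have h0 : ∀ k ∈ range N, maj k = 0 := by
      intro k hk; simp only [Finset.mem_range] at hk
      simp [maj, show k < 2 by omega]
    rw [Finset.sum_congr rfl h0]; simp
  · obtain ⟨M, rfl⟩ : ∃ M, N = M + 2 := ⟨N - 2, by omega⟩
    have h : (0:ℝ) ≤ ((M:ℝ)+1)⁻¹ := by positivity
    linarith [key M]

lemma summable_maj : Summable maj :=
  summable_of_sum_range_le maj_nonneg sum_maj

noncomputable def ff (z : ℂ) (k : ℕ) : ℂ :=
  (ArithmeticFunction.vonMangoldt k : ℂ) * Complex.exp (-z * (Real.log k : ℝ)) / ((Real.log k : ℝ) : ℂ)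

lemma rr_nonneg (sg : ℝ) (k : ℕ) : 0 ≤ rr sg k := by
  unfold rr
  have := ArithmeticFunction.vonMangoldt_nonneg (n := k)
  have : (0:ℝ) ≤ Real.log k := Real.log_natCast_nonneg k
  positivity

lemma norm_ff (z : ℂ) (k : ℕ) : ‖ff z k‖ = rr z.re k := by
  rcases Nat.eq_zero_or_pos k with rfl | hk
  · simp [ff, rr]
  · have hlk : (0:ℝ) ≤ Real.log k := Real.log_natCast_nonneg k
    rw [ff, norm_div, norm_mul]
    rw [Complex.norm_exp]
    have hre : (-z * (Real.log k : ℝ)).re = -z.re * Real.log k := by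
      simp only [Complex.mul_re, Complex.ofReal_re, Complex.ofReal_im, Complex.neg_re, Complex.neg_im, mul_zero, sub_zero, neg_mul]
    rw [hre]
    have hexp : Real.exp (-z.re * Real.log k) = (k:ℝ) ^ (-z.re) := by
      rw [Real.rpow_def_of_pos (by exact_mod_cast hk), mul_comm]
    rw [hexp, Complex.norm_real, Complex.norm_real, Real.norm_eq_abs, Real.norm_eq_abs,
      _root_.abs_of_nonneg hlk, _root_.abs_of_nonneg ArithmeticFunction.vonMangoldt_nonneg, rr]


lemma rr_le_maj' {sg : ℝ} (hsg : 2 ≤ sg) (k : ℕ) :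
    rr sg k ≤ 4 * (2:ℝ)^(-sg) * maj k := by
  rcases Nat.lt_or_ge k 2 with hk | hk
  · have : rr sg k = 0 := by
      interval_cases k <;> simp [rr, ArithmeticFunction.map_zero]
    rw [this, maj, if_pos hk]; simp
  · have hk1 : (1:ℝ) ≤ (k:ℝ) := by exact_mod_cast Nat.one_le_of_lt hk
    have hk2 : (2:ℝ) ≤ (k:ℝ) := by exact_mod_cast hk
    have hlog : 0 < Real.log k := Real.log_pos (by linarith)
    have hΛ : ArithmeticFunction.vonMangoldt k / Real.log k ≤ 1 := by
      rw [div_le_one hlog]; exact ArithmeticFunction.vonMangoldt_le_log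
    have hpow : (k:ℝ)^(-sg) ≤ 4 * (2:ℝ)^(-sg) * ((k:ℝ)^2)⁻¹ := by
      have h1 : (k:ℝ)^(-sg) = (k:ℝ)^(2-sg) * ((k:ℝ)^2)⁻¹ := by
        rw [← Real.rpow_natCast (k:ℝ) 2, ← Real.rpow_neg (by linarith), ← Real.rpow_add (by linarith)]
        congr 1
        push_cast
        ring
      have h2 : (k:ℝ)^(2-sg) ≤ (2:ℝ)^(2-sg) := by
        have hq := Real.rpow_le_one_of_one_le_of_nonpos
          (show (1:ℝ) ≤ (k:ℝ)/2 by linarith) (show 2 - sg ≤ 0 by linarith)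
        rw [Real.div_rpow (by linarith) (by norm_num)] at hq
        have h20 : (0:ℝ) < (2:ℝ)^(2-sg) := Real.rpow_pos_of_pos (by norm_num) _
        rw [div_le_one h20] at hq
        linarith
      have h3 : (2:ℝ)^(2-sg) = 4 * (2:ℝ)^(-sg) := by
        rw [show (2:ℝ)-sg = 2 + -sg by ring, Real.rpow_add (by norm_num)]
        norm_num
      calc (k:ℝ)^(-sg) = (k:ℝ)^(2-sg) * ((k:ℝ)^2)⁻¹ := h1
        _ ≤ (2:ℝ)^(2-sg) * ((k:ℝ)^2)⁻¹ := by
            apply mul_le_mul_of_nonneg_right h2 (by positivity)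
        _ = 4 * (2:ℝ)^(-sg) * ((k:ℝ)^2)⁻¹ := by rw [h3]
    rw [maj, if_neg (by omega)]
    calc rr sg k = (ArithmeticFunction.vonMangoldt k / Real.log k) * (k:ℝ)^(-sg) := by
          rw [rr]; ring
      _ ≤ 1 * (k:ℝ)^(-sg) := by
          apply mul_le_mul_of_nonneg_right hΛ (Real.rpow_nonneg (by linarith) _)
      _ = (k:ℝ)^(-sg) := one_mul _
      _ ≤ 4 * (2:ℝ)^(-sg) * ((k:ℝ)^2)⁻¹ := hpow

lemma four_rpow_le {sg : ℝ} (hsg : 2 ≤ sg) : 4 * (2:ℝ)^(-sg) ≤ 1 := by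
  have : (2:ℝ)^(-sg) ≤ (2:ℝ)^(-(2:ℝ)) :=
    Real.rpow_le_rpow_of_exponent_le (by norm_num) (by linarith)
  have h2 : (2:ℝ)^(-(2:ℝ)) = 1/4 := by
    rw [show (-(2:ℝ)) = ((-2 : ℤ) : ℝ) by norm_num, Real.rpow_intCast]
    norm_num
  rw [h2] at this
  linarith

lemma rr_le_maj {sg : ℝ} (hsg : 2 ≤ sg) (k : ℕ) : rr sg k ≤ maj k := by
  have h1 := rr_le_maj' hsg k
  have h2 := four_rpow_le hsg
  have h3 : 0 ≤ maj k := by unfold maj; split <;> positivity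
  nlinarith


lemma logZeta_eq {z : ℂ} (hz : 2 ≤ z.re) :
    Complex.log (riemannZeta z) = ∑' k : ℕ, ff z k := by
  have hnorm : ∀ k, ‖ff z k‖ ≤ maj k := fun k => by
    rw [norm_ff]; exact rr_le_maj hz k
  have hsum : Summable (ff z) := Summable.of_norm_bounded summable_maj hnorm
  have hsupp : Function.support (ff z) ⊆ {n | IsPrimePow n} := by
    intro k hk
    simp only [Function.mem_support, ne_eq] at hk
    by_contra hcon
    apply hk
    have h0 : ArithmeticFunction.vonMangoldt k = 0 := by
      by_contra h
      exact hcon (ArithmeticFunction.vonMangoldt_ne_zero_iff.mp h)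
    simp [ff, h0]
  have key : ∑' k, ff z k = ∑' p : Nat.Primes, -Complex.log (1 - (p:ℂ)^(-z)) := by
    rw [tsum_eq_tsum_primes_of_support_subset_prime_powers hsum hsupp]
    refine tsum_congr fun p => ?_
    have hp2 : 2 ≤ (p:ℕ) := p.prop.two_le
    have hp2' : (1:ℝ) < ((p:ℕ):ℝ) := by exact_mod_cast Nat.lt_of_lt_of_le one_lt_two hp2
    have hlogp : 0 < Real.log ((p:ℕ):ℝ) := Real.log_pos hp2'
    set w : ℂ := ((p:ℕ):ℂ)^(-z) with hw
    have hwnorm : ‖w‖ < 1 := by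
      rw [hw, Complex.norm_natCast_cpow_of_pos (by omega)]
      exact Real.rpow_lt_one_of_one_lt_of_neg hp2' (by simp; linarith)
    have hwexp : w = Complex.exp ((Real.log ((p:ℕ):ℝ) : ℂ) * (-z)) := by
      rw [hw, Complex.cpow_def_of_ne_zero (by exact_mod_cast (by omega : (p:ℕ) ≠ 0)),
        ← Complex.natCast_log]
    have hterm : ∀ j : ℕ, ff z ((p:ℕ)^(j+1)) = w^(j+1) / (((j+1 : ℕ)):ℂ) := by
      intro j
      have hΛ : ArithmeticFunction.vonMangoldt ((p:ℕ)^(j+1)) = Real.log ((p:ℕ):ℝ) := by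
        rw [ArithmeticFunction.vonMangoldt_apply_pow (Nat.succ_ne_zero j),
          ArithmeticFunction.vonMangoldt_apply_prime p.prop]
      have hlog : Real.log ((((p:ℕ)^(j+1) : ℕ)):ℝ) = ((j+1:ℕ):ℝ) * Real.log ((p:ℕ):ℝ) := by
        push_cast
        rw [Real.log_pow]
        push_cast
        ring
      rw [ff, hΛ, hlog, hwexp, ← Complex.exp_nat_mul]
      have harg : ((j+1:ℕ):ℂ) * ((Real.log ((p:ℕ):ℝ) : ℂ) * (-z))
          = -z * ((((j+1:ℕ):ℝ) * Real.log ((p:ℕ):ℝ) : ℝ) : ℂ) := by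
        push_cast
        ring
      rw [harg]
      have hlne : ((Real.log ((p:ℕ):ℝ) : ℝ):ℂ) ≠ 0 :=
        Complex.ofReal_ne_zero.mpr (ne_of_gt hlogp)
      have hcast : (((((j+1:ℕ)):ℝ) * Real.log ((p:ℕ):ℝ) : ℝ) : ℂ)
          = (((j+1:ℕ)):ℂ) * ((Real.log ((p:ℕ):ℝ) : ℝ):ℂ) := by push_cast; ring
      rw [hcast, mul_comm ((((j+1:ℕ))):ℂ) _, mul_div_mul_left _ _ hlne]
    have hs := Complex.hasSum_taylorSeries_neg_log hwnorm
    have hs1 : HasSum (fun j : ℕ => w^(j+1)/(((j+1:ℕ)):ℂ)) (-Complex.log (1-w)) := by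
      have h2 := (hasSum_nat_add_iff' (f := fun n : ℕ => w^n/(n:ℂ)) 1).mpr hs
      simpa using h2
    rw [tsum_congr hterm, hs1.tsum_eq]
  have hzeta := riemannZeta_eulerProduct_exp_log (s := z) (by linarith : 1 < z.re)
  have hSnorm : ‖∑' k, ff z k‖ ≤ 1 := by
    have hsn : Summable fun k => ‖ff z k‖ :=
      Summable.of_nonneg_of_le (fun k => norm_nonneg _) hnorm summable_maj
    refine le_trans (norm_tsum_le_tsum_norm hsn) (le_trans (Summable.tsum_le_tsum hnorm hsn summable_maj) ?_)
    exact summable_maj.tsum_le_of_sum_range_le sum_maj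
  have him : |(∑' k, ff z k).im| ≤ 1 :=
    le_trans (Complex.abs_im_le_norm _) hSnorm
  rw [← hzeta, ← key, Complex.log_exp]
  · rw [abs_le] at him
    nlinarith [Real.pi_gt_three]
  · rw [abs_le] at him
    nlinarith [Real.pi_gt_three]

noncomputable def EE (b T : ℝ) : ℂ := ∫ t in (0:ℝ)..T, Complex.exp ((b:ℂ) * t * Complex.I)

lemma contE (b : ℝ) : Continuous (fun t : ℝ => Complex.exp ((b:ℂ) * t * Complex.I)) :=
  Complex.continuous_exp.comp ((continuous_const.mul Complex.continuous_ofReal).mul continuous_const)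

lemma EE_zero (T : ℝ) : EE 0 T = T := by
  unfold EE
  simp

lemma normE {b : ℝ} (T : ℝ) (hb : b ≠ 0) : ‖EE b T‖ ≤ 2 / |b| := by
  unfold EE
  have hc : ((b:ℂ) * Complex.I) ≠ 0 := by
    simp [Complex.ext_iff, hb]
  have heq : ∀ t : ℝ, (b:ℂ) * t * Complex.I = ((b:ℂ) * Complex.I) * t := by
    intro t; ring
  rw [intervalIntegral.integral_congr (g := fun t : ℝ => Complex.exp (((b:ℂ)*Complex.I) * t))
    (fun t _ => by rw [heq t])]
  rw [integral_exp_mul_complex hc]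
  have hnorm1 : ∀ t : ℝ, ‖Complex.exp ((b:ℂ)*Complex.I*t)‖ = 1 := by
    intro t
    rw [Complex.norm_exp]
    have : ((b:ℂ)*Complex.I*t).re = 0 := by simp
    rw [this, Real.exp_zero]
  rw [norm_div]
  have hden : ‖(b:ℂ)*Complex.I‖ = |b| := by
    simp [map_mul, Complex.norm_real]
  rw [hden]
  gcongr
  calc ‖Complex.exp ((b:ℂ)*Complex.I*T) - Complex.exp ((b:ℂ)*Complex.I*(0:ℝ))‖
      ≤ ‖Complex.exp ((b:ℂ)*Complex.I*T)‖ + ‖Complex.exp ((b:ℂ)*Complex.I*(0:ℝ))‖ :=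
        norm_sub_le _ _
    _ = 2 := by rw [hnorm1, hnorm1]; norm_num


noncomputable def GG (sg : ℝ) (m : ℕ) (e : ℂ) (k : ℕ) (t : ℝ) : ℂ :=
  (rr sg k : ℂ) * (Complex.exp (((Real.log m - Real.log k : ℝ) : ℂ) * t * Complex.I)
    + e * Complex.exp (((-(Real.log m + Real.log k) : ℝ) : ℂ) * t * Complex.I))

lemma rr_lt_two (sg : ℝ) (k : ℕ) (hk : k < 2) : rr sg k = 0 := by
  interval_cases k <;> simp [rr]

lemma contG (sg : ℝ) (m : ℕ) (e : ℂ) (k : ℕ) : Continuous (GG sg m e k) := by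
  unfold GG
  apply continuous_const.mul
  apply Continuous.add
  · exact Complex.continuous_exp.comp
      ((continuous_const.mul Complex.continuous_ofReal).mul continuous_const)
  · exact continuous_const.mul (Complex.continuous_exp.comp
      ((continuous_const.mul Complex.continuous_ofReal).mul continuous_const))

lemma normG (sg : ℝ) (m : ℕ) (e : ℂ) (he : ‖e‖ = 1) (k : ℕ) (t : ℝ)
    (hrr : 0 ≤ rr sg k) : ‖GG sg m e k t‖ ≤ 2 * rr sg k := by
  unfold GG
  rw [norm_mul, Complex.norm_real, Real.norm_eq_abs, _root_.abs_of_nonneg hrr]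
  have h1 : ∀ b : ℝ, ‖Complex.exp ((b:ℂ) * t * Complex.I)‖ = 1 := by
    intro b
    rw [Complex.norm_exp]
    have : ((b:ℂ) * t * Complex.I).re = 0 := by simp
    rw [this, Real.exp_zero]
  calc rr sg k * ‖_ + _‖ ≤ rr sg k *
      (‖Complex.exp (((Real.log m - Real.log k : ℝ):ℂ) * t * Complex.I)‖
        + ‖e * Complex.exp (((-(Real.log m + Real.log k) : ℝ):ℂ) * t * Complex.I)‖) := by
        apply mul_le_mul_of_nonneg_left (norm_add_le _ _) hrr
    _ = rr sg k * (1 + 1) := by rw [norm_mul, he, h1, h1]; ring_nf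
    _ = 2 * rr sg k := by ring

lemma integrand_eq {sg : ℝ} (hsg : 2 ≤ sg) {m : ℕ} (hm : 2 ≤ m) (e : ℂ) (t : ℝ) :
    Complex.log (riemannZeta ((sg:ℂ) + t * Complex.I)) *
      ((m:ℂ) ^ (Complex.I * t) + e * (m:ℂ) ^ (-(Complex.I * t)))
    = ∑' k, GG sg m e k t := by
  set z : ℂ := (sg:ℂ) + t * Complex.I with hzdef
  have hzre : z.re = sg := by simp [hzdef]
  rw [logZeta_eq (z := z) (by rw [hzre]; exact hsg), ← tsum_mul_right]
  refine tsum_congr fun k => ?_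
  rcases Nat.lt_or_ge k 2 with hk | hk
  · have h0 : ArithmeticFunction.vonMangoldt k = 0 := by
      interval_cases k <;> simp
    simp [ff, GG, h0, rr]
  · have hk0 : (0:ℝ) < (k:ℝ) := by positivity
    have hm0 : (m:ℂ) ≠ 0 := by
      simp only [ne_eq, Nat.cast_eq_zero]; omega
    have hmI : (m:ℂ) ^ (Complex.I * t) = Complex.exp (((Real.log m : ℝ):ℂ) * t * Complex.I) := by
      rw [Complex.cpow_def_of_ne_zero hm0, ← Complex.natCast_log]
      congr 1; ring
    have hmI' : (m:ℂ) ^ (-(Complex.I * t))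
        = Complex.exp (((-Real.log m : ℝ):ℂ) * t * Complex.I) := by
      rw [Complex.cpow_def_of_ne_zero hm0, ← Complex.natCast_log]
      congr 1; push_cast; ring
    have hsplit : Complex.exp (-z * (Real.log k : ℝ))
        = (((k:ℝ)^(-sg) : ℝ) : ℂ) * Complex.exp (((-Real.log k : ℝ):ℂ) * t * Complex.I) := by
      have h1 : (-z * ((Real.log k : ℝ):ℂ))
          = (((-sg * Real.log k : ℝ)):ℂ) + (((-Real.log k : ℝ)):ℂ) * t * Complex.I := by
        rw [hzdef]; push_cast; ring
      rw [h1, Complex.exp_add]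
      congr 1
      rw [← Complex.ofReal_exp]
      congr 1
      rw [Real.rpow_def_of_pos hk0, mul_comm]
    have e1 : Complex.exp (((Real.log m - Real.log k : ℝ):ℂ) * t * Complex.I)
        = Complex.exp (((-Real.log k : ℝ):ℂ) * t * Complex.I)
          * Complex.exp (((Real.log m : ℝ):ℂ) * t * Complex.I) := by
      rw [← Complex.exp_add]; congr 1; push_cast; ring
    have e2 : Complex.exp (((-(Real.log m + Real.log k) : ℝ):ℂ) * t * Complex.I)
        = Complex.exp (((-Real.log k : ℝ):ℂ) * t * Complex.I)
          * Complex.exp (((-Real.log m : ℝ):ℂ) * t * Complex.I) := by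
      rw [← Complex.exp_add]; congr 1; push_cast; ring
    rw [ff, GG, hmI, hmI', hsplit, e1, e2, rr]
    push_cast
    ring

lemma J_eq (sg T : ℝ) (m : ℕ) (e : ℂ) (k : ℕ) :
    (∫ t in (0:ℝ)..T, GG sg m e k t)
      = (rr sg k : ℂ) * (EE (Real.log m - Real.log k) T
          + e * EE (-(Real.log m + Real.log k)) T) := by
  unfold GG EE
  rw [intervalIntegral.integral_const_mul]
  congr 1
  rw [intervalIntegral.integral_add ((contE _).intervalIntegrable _ _)
    (((contE _).intervalIntegrable _ _).const_mul e),
    intervalIntegral.integral_const_mul]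

lemma swapHasSum {sg : ℝ} (hsg : 2 ≤ sg) {T : ℝ} (hT : 0 ≤ T) (m : ℕ) {e : ℂ}
    (he : ‖e‖ = 1) :
    HasSum (fun k => ∫ t in (0:ℝ)..T, GG sg m e k t)
      (∫ t in (0:ℝ)..T, ∑' k, GG sg m e k t) := by
  have hint : ∀ k, Integrable (GG sg m e k) (volume.restrict (Set.Ioc 0 T)) := fun k =>
    ((contG sg m e k).integrableOn_Icc (a := (0:ℝ)) (b := T)).mono_set Set.Ioc_subset_Icc_self
  have hbound : ∀ k, (∫ t in Set.Ioc (0:ℝ) T, ‖GG sg m e k t‖) ≤ 2 * T * maj k := by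
    intro k
    have h1 : (∫ t in Set.Ioc (0:ℝ) T, ‖GG sg m e k t‖)
        ≤ ∫ _t in Set.Ioc (0:ℝ) T, (2 * rr sg k) := by
      apply setIntegral_mono_on (hint k).norm
        (integrableOn_const (by rw [Real.volume_Ioc]; exact ENNReal.ofReal_ne_top))
        measurableSet_Ioc
      intro t _
      exact normG sg m e he k t (rr_nonneg sg k)
    have h2 : (∫ _t in Set.Ioc (0:ℝ) T, (2 * rr sg k)) = T * (2 * rr sg k) := by
      rw [setIntegral_const, Real.volume_real_Ioc_of_le hT, smul_eq_mul]
      ring_nf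
    have h3 : rr sg k ≤ maj k := rr_le_maj hsg k
    calc (∫ t in Set.Ioc (0:ℝ) T, ‖GG sg m e k t‖) ≤ T * (2 * rr sg k) := h1.trans_eq h2
      _ ≤ 2 * T * maj k := by nlinarith [rr_nonneg sg k]
  have hsumnorm : Summable (fun k => ∫ t in Set.Ioc (0:ℝ) T, ‖GG sg m e k t‖) :=
    Summable.of_nonneg_of_le (fun k => integral_nonneg fun t => norm_nonneg _) hbound
      (summable_maj.mul_left (2*T))
  have H := MeasureTheory.hasSum_integral_of_summable_integral_norm hint hsumnorm
  simpa only [intervalIntegral.integral_of_le hT] using H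

lemma sum_delta (m N : ℕ) :
    ∑ k ∈ range N, (if k = m then (0:ℝ) else ((((m:ℝ) - (k:ℝ))^2)⁻¹)) ≤ 4 := by
  set g1 : ℕ → ℝ := fun k => if k < m then ((((m:ℝ) - (k:ℝ))^2)⁻¹) else 0 with hg1
  set g2 : ℕ → ℝ := fun k => if m < k then ((((k:ℝ) - (m:ℝ))^2)⁻¹) else 0 with hg2
  have hg1nn : ∀ k, 0 ≤ g1 k := by intro k; rw [hg1]; dsimp only; split <;> positivity
  have hg2nn : ∀ k, 0 ≤ g2 k := by intro k; rw [hg2]; dsimp only; split <;> positivity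
  have hterm : ∀ k, (if k = m then (0:ℝ) else ((((m:ℝ) - (k:ℝ))^2)⁻¹)) ≤ g1 k + g2 k := by
    intro k
    rcases lt_trichotomy k m with h | h | h
    · rw [if_neg (by omega), hg1, hg2]
      simp only [if_pos h, if_neg (by omega : ¬ m < k)]
      simp
    · rw [if_pos h]; exact add_nonneg (hg1nn k) (hg2nn k)
    · rw [if_neg (by omega), hg1, hg2]
      simp only [if_neg (by omega : ¬ k < m), if_pos h]
      rw [show (((m:ℝ) - (k:ℝ))^2) = (((k:ℝ) - (m:ℝ))^2) from by ring]
      simp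
  have hsum1 : ∀ M : ℕ, ∑ k ∈ range M, g1 k ≤ 2 := by
    intro M
    have step1 : ∑ k ∈ range M, g1 k ≤ ∑ k ∈ range (M + m), g1 k :=
      Finset.sum_le_sum_of_subset_of_nonneg
        (Finset.range_subset_range.mpr (by omega)) (fun k _ _ => hg1nn k)
    have step2 : ∑ k ∈ range (M + m), g1 k = ∑ k ∈ range m, g1 k := by
      symm
      apply Finset.sum_subset (Finset.range_subset_range.mpr (by omega))
      intro k _ hk
      simp only [Finset.mem_range] at hk
      rw [hg1]; simp only; rw [if_neg (by omega)]
    have step3 : ∑ k ∈ range m, g1 k = ∑ j ∈ range m, (((j:ℝ)+1)^2)⁻¹ := by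
      rw [← Finset.sum_range_reflect g1 m]
      apply Finset.sum_congr rfl
      intro j hj
      simp only [Finset.mem_range] at hj
      rw [hg1]; simp only
      rw [if_pos (by omega)]
      congr 2
      have : ((m - 1 - j : ℕ) : ℝ) = (m:ℝ) - 1 - (j:ℝ) := by
        have : m - 1 - j = m - (1 + j) := by omega
        rw [this]
        push_cast [Nat.cast_sub (by omega : 1 + j ≤ m)]
        ring
      rw [this]; ring
    rw [step3] at step2
    calc ∑ k ∈ range M, g1 k ≤ ∑ k ∈ range (M+m), g1 k := step1
      _ = ∑ j ∈ range m, (((j:ℝ)+1)^2)⁻¹ := step2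
      _ ≤ 2 := H1 m
  have hsum2 : ∀ M : ℕ, ∑ k ∈ range M, g2 k ≤ 2 := by
    intro M
    rcases le_or_gt M (m+1) with h | h
    · have : ∀ k ∈ range M, g2 k = 0 := by
        intro k hk; simp only [Finset.mem_range] at hk
        rw [hg2]; simp only; rw [if_neg (by omega)]
      rw [Finset.sum_congr rfl this]
      simp
    · have hsplit : ∑ k ∈ range M, g2 k
          = ∑ k ∈ Finset.Ico 0 (m+1), g2 k + ∑ k ∈ Finset.Ico (m+1) M, g2 k := by
        rw [Finset.range_eq_Ico,
          ← Finset.sum_Ico_consecutive _ (by omega : 0 ≤ m+1) (by omega : m+1 ≤ M)]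
      have hz : ∑ k ∈ Finset.Ico 0 (m+1), g2 k = 0 := by
        apply Finset.sum_eq_zero
        intro k hk
        simp only [Finset.mem_Ico] at hk
        rw [hg2]; simp only; rw [if_neg (by omega)]
      have hre : ∑ k ∈ Finset.Ico (m+1) M, g2 k
          = ∑ j ∈ range (M - (m+1)), g2 (m+1+j) := by
        rw [Finset.sum_Ico_eq_sum_range]
      have hval : ∀ j, g2 (m+1+j) = (((j:ℝ)+1)^2)⁻¹ := by
        intro j
        rw [hg2]; simp only; rw [if_pos (by omega)]
        congr 2
        push_cast
        ring
      rw [hsplit, hz, hre, zero_add, Finset.sum_congr rfl (fun j _ => hval j)]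
      exact H1 _
  calc ∑ k ∈ range N, (if k = m then (0:ℝ) else ((((m:ℝ) - (k:ℝ))^2)⁻¹))
      ≤ ∑ k ∈ range N, (g1 k + g2 k) := Finset.sum_le_sum (fun k _ => hterm k)
    _ = ∑ k ∈ range N, g1 k + ∑ k ∈ range N, g2 k := Finset.sum_add_distrib
    _ ≤ 2 + 2 := add_le_add (hsum1 N) (hsum2 N)
    _ = 4 := by norm_num

lemma log_diff_ge {b a : ℕ} (hb : 2 ≤ b) (hlt : b < a) :
    ((a:ℝ) - (b:ℝ)) / (a:ℝ) ≤ Real.log a - Real.log b := by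
  have ha0 : (0:ℝ) < (a:ℝ) := by
    have : 0 < a := by omega
    exact_mod_cast this
  have hb0 : (0:ℝ) < (b:ℝ) := by
    have : 0 < b := by omega
    exact_mod_cast this
  have h1 : Real.log ((b:ℝ) / (a:ℝ)) ≤ (b:ℝ)/(a:ℝ) - 1 :=
    Real.log_le_sub_one_of_pos (div_pos hb0 ha0)
  rw [Real.log_div (ne_of_gt hb0) (ne_of_gt ha0)] at h1
  have h2 : (b:ℝ)/(a:ℝ) - 1 = -(((a:ℝ) - (b:ℝ)) / (a:ℝ)) := by
    field_simp
    ring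
  rw [h2] at h1
  linarith

lemma amgm (x y : ℝ) (hx : 0 ≤ x) (hy : 0 ≤ y) : 2*x*y ≤ (3/2)*x^2 + y^2 := by
  nlinarith [sq_nonneg (x - y)]

lemma term_bound {sg : ℝ} (hsg : 2 ≤ sg) {m k : ℕ} (hm : 2 ≤ m) (hk : 2 ≤ k)
    (hne : k ≠ m) {e : ℂ} (he : ‖e‖ = 1) (T : ℝ) :
    ‖(rr sg k : ℂ) * (EE (Real.log m - Real.log k) T
        + e * EE (-(Real.log m + Real.log k)) T)‖
      ≤ 4 * (2:ℝ)^(-sg) * (5 * (((k:ℝ))^2)⁻¹ + ((((m:ℝ) - (k:ℝ)))^2)⁻¹) := by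
  have hk2 : (2:ℝ) ≤ (k:ℝ) := by exact_mod_cast hk
  have hm2 : (2:ℝ) ≤ (m:ℝ) := by exact_mod_cast hm
  set d : ℝ := |(m:ℝ) - (k:ℝ)| with hd
  have hd1 : 1 ≤ d := by
    rcases Nat.lt_or_ge k m with h | h
    · have h9 : (k:ℝ) + 1 ≤ (m:ℝ) := by exact_mod_cast Nat.succ_le_of_lt h
      rw [hd, _root_.abs_of_nonneg (by linarith)]
      linarith
    · have hlt : m < k := by omega
      have h9 : (m:ℝ) + 1 ≤ (k:ℝ) := by exact_mod_cast Nat.succ_le_of_lt hlt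
      rw [hd, abs_sub_comm, _root_.abs_of_nonneg (by linarith)]
      linarith
  have hd0 : 0 < d := by linarith
  have hlm2 : Real.log 2 ≤ Real.log m := Real.log_le_log (by norm_num) hm2
  have hlk2 : Real.log 2 ≤ Real.log k := Real.log_le_log (by norm_num) hk2
  have hlog2 : (0.6931471803:ℝ) < Real.log 2 := Real.log_two_gt_d9
  -- bound on first integral
  have hb1 : d / ((k:ℝ) + d) ≤ |Real.log m - Real.log k| := by
    rcases Nat.lt_or_ge k m with h | h
    · have h1 := log_diff_ge hk h
      have hmr : (m:ℝ) - (k:ℝ) > 0 := by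
        have : (k:ℝ) < (m:ℝ) := by exact_mod_cast h
        linarith
      have e1 : (m:ℝ) - (k:ℝ) = d := by rw [hd, _root_.abs_of_pos hmr]
      have e2 : (k:ℝ) + d = (m:ℝ) := by rw [← e1]; ring
      rw [e2, ← e1]
      exact le_trans h1 (le_abs_self _)
    · have hlt : m < k := by omega
      have h1 := log_diff_ge hm hlt
      have hmr : (k:ℝ) - (m:ℝ) > 0 := by
        have : (m:ℝ) < (k:ℝ) := by exact_mod_cast hlt
        linarith
      have hdm : d = (k:ℝ) - (m:ℝ) := by
        rw [hd, abs_sub_comm, _root_.abs_of_pos hmr]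
      have h2 : |Real.log m - Real.log k| ≥ Real.log k - Real.log m := by
        rw [abs_sub_comm]; exact le_abs_self _
      have h4 : d / ((k:ℝ) + d) ≤ d / (k:ℝ) := by
        apply div_le_div_of_nonneg_left (le_of_lt hd0) (by linarith) (by linarith)
      have h5 : ((k:ℝ) - (m:ℝ)) / (k:ℝ) = d / (k:ℝ) := by rw [hdm]
      linarith
  have hb1ne : Real.log m - Real.log k ≠ 0 := by
    intro hcon
    rw [hcon] at hb1
    simp only [abs_zero] at hb1
    have : 0 < d / ((k:ℝ) + d) := div_pos hd0 (by linarith)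
    linarith
  have hE1 : ‖EE (Real.log m - Real.log k) T‖ ≤ 2 * ((k:ℝ) + d) / d := by
    refine le_trans (normE T hb1ne) ?_
    rw [div_le_div_iff₀ (abs_pos.mpr hb1ne) hd0]
    have h6 : 2 * (d / ((k:ℝ)+d)) * ((k:ℝ)+d) ≤ 2 * |Real.log m - Real.log k| * ((k:ℝ)+d) := by
      have hkd : (0:ℝ) < (k:ℝ) + d := by linarith
      nlinarith
    have h7 : 2 * (d / ((k:ℝ)+d)) * ((k:ℝ)+d) = 2 * d := by
      field_simp
    calc 2 * d = 2 * (d / ((k:ℝ)+d)) * ((k:ℝ)+d) := h7.symm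
      _ ≤ 2 * |Real.log m - Real.log k| * ((k:ℝ)+d) := h6
      _ = 2 * ((k:ℝ)+d) * |Real.log m - Real.log k| := by ring
  have hb2ne : -(Real.log m + Real.log k) ≠ 0 := by
    intro hcon
    nlinarith
  have hE2 : ‖EE (-(Real.log m + Real.log k)) T‖ ≤ 3/2 := by
    refine le_trans (normE T hb2ne) ?_
    rw [abs_neg, _root_.abs_of_pos (by nlinarith)]
    rw [div_le_iff₀ (by nlinarith)]
    nlinarith
  have hnorm : ‖(rr sg k : ℂ) * (EE (Real.log m - Real.log k) T
        + e * EE (-(Real.log m + Real.log k)) T)‖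
      ≤ rr sg k * (2 * ((k:ℝ) + d) / d + 3/2) := by
    rw [norm_mul, Complex.norm_real, Real.norm_eq_abs,
      _root_.abs_of_nonneg (rr_nonneg sg k)]
    have h8 : ‖EE (Real.log m - Real.log k) T + e * EE (-(Real.log m + Real.log k)) T‖
        ≤ 2 * ((k:ℝ) + d) / d + 3/2 := by
      refine le_trans (norm_add_le _ _) ?_
      rw [norm_mul, he, one_mul]
      exact add_le_add hE1 hE2
    exact mul_le_mul_of_nonneg_left h8 (rr_nonneg sg k)
  have hrrb : rr sg k ≤ 4 * (2:ℝ)^(-sg) * (((k:ℝ))^2)⁻¹ := by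
    have := rr_le_maj' hsg k
    rwa [maj, if_neg (by omega)] at this
  have hfinal : (((k:ℝ))^2)⁻¹ * (2 * ((k:ℝ) + d) / d + 3/2)
      ≤ 5 * (((k:ℝ))^2)⁻¹ + (d^2)⁻¹ := by
    have hkne : (k:ℝ) ≠ 0 := by linarith
    have hdne : d ≠ 0 := ne_of_gt hd0
    have hexp : (((k:ℝ))^2)⁻¹ * (2 * ((k:ℝ) + d) / d + 3/2)
        = 2 * (((k:ℝ))^2)⁻¹ + 2 * ((k:ℝ))⁻¹ * d⁻¹ + (3/2) * (((k:ℝ))^2)⁻¹ := by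
      field_simp
      ring
    have hkey := amgm ((k:ℝ))⁻¹ d⁻¹ (by positivity) (by positivity)
    have hik : (((k:ℝ))⁻¹)^2 = (((k:ℝ))^2)⁻¹ := by
      rw [← inv_pow]
    have hid : (d⁻¹)^2 = (d^2)⁻¹ := by rw [← inv_pow]
    rw [hik, hid] at hkey
    rw [hexp]
    linarith
  have hdsq : (d^2)⁻¹ = ((((m:ℝ) - (k:ℝ)))^2)⁻¹ := by
    rw [hd, _root_.sq_abs]
  calc ‖_‖ ≤ rr sg k * (2 * ((k:ℝ) + d) / d + 3/2) := hnorm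
    _ ≤ (4 * (2:ℝ)^(-sg) * (((k:ℝ))^2)⁻¹) * (2 * ((k:ℝ) + d) / d + 3/2) := by
        apply mul_le_mul_of_nonneg_right hrrb
        have : (0:ℝ) < d := hd0
        positivity
    _ = 4 * (2:ℝ)^(-sg) * ((((k:ℝ))^2)⁻¹ * (2 * ((k:ℝ) + d) / d + 3/2)) := by ring
    _ ≤ 4 * (2:ℝ)^(-sg) * (5 * (((k:ℝ))^2)⁻¹ + (d^2)⁻¹) := by
        apply mul_le_mul_of_nonneg_left hfinal
        positivity
    _ = 4 * (2:ℝ)^(-sg) * (5 * (((k:ℝ))^2)⁻¹ + ((((m:ℝ) - (k:ℝ)))^2)⁻¹) := by rw [hdsq]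

lemma mterm_bound {sg : ℝ} (hsg : 2 ≤ sg) {m : ℕ} (hm : 2 ≤ m) {e : ℂ}
    (he : ‖e‖ = 1) (T : ℝ) :
    ‖(rr sg m : ℂ) * (e * EE (-(Real.log m + Real.log m)) T)‖
      ≤ (3/2) * (2:ℝ)^(-sg) := by
  have hm2 : (2:ℝ) ≤ (m:ℝ) := by exact_mod_cast hm
  have hlm2 : Real.log 2 ≤ Real.log m := Real.log_le_log (by norm_num) hm2
  have hlog2 : (0.6931471803:ℝ) < Real.log 2 := Real.log_two_gt_d9
  have hbne : -(Real.log m + Real.log m) ≠ 0 := by intro hcon; nlinarith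
  have hE : ‖EE (-(Real.log m + Real.log m)) T‖ ≤ 3/2 := by
    refine le_trans (normE T hbne) ?_
    rw [abs_neg, _root_.abs_of_pos (by nlinarith)]
    rw [div_le_iff₀ (by nlinarith)]
    nlinarith
  have hrrb : rr sg m ≤ (2:ℝ)^(-sg) := by
    have h1 := rr_le_maj' hsg m
    rw [maj, if_neg (by omega)] at h1
    have h2 : (((m:ℝ))^2)⁻¹ ≤ 4⁻¹ := by
      apply inv_anti₀ (by norm_num)
      nlinarith
    have h3 : (0:ℝ) < (2:ℝ)^(-sg) := Real.rpow_pos_of_pos (by norm_num) _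
    calc rr sg m ≤ 4 * (2:ℝ)^(-sg) * (((m:ℝ))^2)⁻¹ := h1
      _ ≤ 4 * (2:ℝ)^(-sg) * 4⁻¹ := by nlinarith
      _ = (2:ℝ)^(-sg) := by ring
  rw [norm_mul, norm_mul, he, one_mul, Complex.norm_real, Real.norm_eq_abs,
    _root_.abs_of_nonneg (rr_nonneg sg m)]
  have h3 : (0:ℝ) < (2:ℝ)^(-sg) := Real.rpow_pos_of_pos (by norm_num) _
  calc rr sg m * ‖EE (-(Real.log m + Real.log m)) T‖ ≤ (2:ℝ)^(-sg) * (3/2) := by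
        apply mul_le_mul hrrb hE (norm_nonneg _) (le_of_lt h3)
    _ = (3/2) * (2:ℝ)^(-sg) := by ring

end LZT

/-- for m ≥ 2, σ ≥ 2, T > 0 and any integer n ≥ 1,
    ∫_0^T log ζ(σ+it)(m^{it} + (−1)^{n+1} m^{−it}) dt = (Λ(m)/(m^σ log m)) T + O(2^{−σ}),
    with an absolute implied constant. -/
theorem integral_log_zeta_twisted :
    ∃ C > 0, ∀ (m n : ℕ) (σ T : ℝ), 2 ≤ m → 1 ≤ n → 2 ≤ σ → 0 < T →
      ‖(∫ t in (0:ℝ)..T, Complex.log (riemannZeta (σ + t * Complex.I)) *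
            ((m : ℂ) ^ (Complex.I * t) + (-1) ^ (n + 1) * (m : ℂ) ^ (-(Complex.I * t))))
          - ((ArithmeticFunction.vonMangoldt m / ((m : ℝ) ^ σ * Real.log m) * T : ℝ) : ℂ)‖
        ≤ C * (2 : ℝ) ^ (-σ) := by
  refine ⟨1000, by norm_num, ?_⟩
  intro m n sg T hm hn hsg hT
  set e : ℂ := (-1)^(n+1) with he_def
  have he : ‖e‖ = 1 := by rw [he_def, norm_pow, norm_neg, norm_one, one_pow]
  have hpow : (0:ℝ) < (2:ℝ)^(-sg) := Real.rpow_pos_of_pos (by norm_num) _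
  have hswap := LZT.swapHasSum hsg hT.le m he
  have h1 : (∫ t in (0:ℝ)..T, Complex.log (riemannZeta (sg + t * Complex.I)) *
        ((m:ℂ) ^ (Complex.I * t) + e * (m:ℂ) ^ (-(Complex.I * t))))
      = ∑' k, ∫ t in (0:ℝ)..T, LZT.GG sg m e k t := by
    rw [intervalIntegral.integral_congr (g := fun t => ∑' k, LZT.GG sg m e k t)
      (fun t _ => LZT.integrand_eq hsg hm e t)]
    exact hswap.tsum_eq.symm
  rw [h1, hswap.summable.tsum_eq_add_tsum_ite m]
  -- main term
  have hmain : (∫ t in (0:ℝ)..T, LZT.GG sg m e m t)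
      = ((ArithmeticFunction.vonMangoldt m / ((m : ℝ) ^ sg * Real.log m) * T : ℝ) : ℂ)
        + (LZT.rr sg m : ℂ) * (e * LZT.EE (-(Real.log m + Real.log m)) T) := by
    rw [LZT.J_eq, sub_self, LZT.EE_zero]
    have hcast : (ArithmeticFunction.vonMangoldt m / ((m : ℝ) ^ sg * Real.log m) * T : ℝ)
        = LZT.rr sg m * T := by
      rw [LZT.rr, Real.rpow_neg (by positivity)]
      ring
    rw [hcast]
    push_cast
    ring
  rw [hmain]
  -- error sum bound
  set S : ℂ := ∑' k, (if k = m then 0 else ∫ t in (0:ℝ)..T, LZT.GG sg m e k t) with hS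
  set DD : ℕ → ℝ := fun k => if k = m then 0 else (if k < 2 then 0
      else 4 * (2:ℝ)^(-sg) * (5 * (((k:ℝ))^2)⁻¹ + ((((m:ℝ) - (k:ℝ)))^2)⁻¹)) with hDD
  have hDDnn : ∀ k, 0 ≤ DD k := by
    intro k; rw [hDD]; dsimp only
    split
    · exact le_rfl
    · split
      · exact le_rfl
      · positivity
  have hterm : ∀ k, ‖(if k = m then 0 else ∫ t in (0:ℝ)..T, LZT.GG sg m e k t)‖ ≤ DD k := by
    intro k
    rcases eq_or_ne k m with rfl | hne
    · simp [hDD]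
    · rw [if_neg hne, hDD]; dsimp only; rw [if_neg hne]
      rcases Nat.lt_or_ge k 2 with hk | hk
      · rw [if_pos hk, LZT.J_eq, LZT.rr_lt_two sg k hk]
        simp
      · rw [if_neg (by omega), LZT.J_eq]
        exact LZT.term_bound hsg hm hk hne he T
  have hsumDD : ∀ N, ∑ k ∈ Finset.range N, DD k ≤ 36 * (2:ℝ)^(-sg) := by
    intro N
    have hle : ∀ k, DD k ≤ 4 * (2:ℝ)^(-sg) * (5 * LZT.maj k
        + (if k = m then 0 else ((((m:ℝ) - (k:ℝ)))^2)⁻¹)) := by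
      intro k
      rw [hDD]; dsimp only
      rcases eq_or_ne k m with rfl | hne
      · rw [if_pos rfl, if_pos rfl]
        have := LZT.maj_nonneg k
        positivity
      · rw [if_neg hne, if_neg hne]
        rcases Nat.lt_or_ge k 2 with hk | hk
        · rw [if_pos hk]
          have := LZT.maj_nonneg k
          positivity
        · rw [if_neg (by omega), LZT.maj, if_neg (by omega)]
    calc ∑ k ∈ Finset.range N, DD k
        ≤ ∑ k ∈ Finset.range N, (4 * (2:ℝ)^(-sg) * (5 * LZT.maj k
            + (if k = m then 0 else ((((m:ℝ) - (k:ℝ)))^2)⁻¹))) :=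
          Finset.sum_le_sum (fun k _ => hle k)
      _ = 4 * (2:ℝ)^(-sg) * (5 * (∑ k ∈ Finset.range N, LZT.maj k)
            + ∑ k ∈ Finset.range N, (if k = m then 0 else ((((m:ℝ) - (k:ℝ)))^2)⁻¹)) := by
          rw [← Finset.mul_sum]
          congr 1
          rw [Finset.sum_add_distrib, ← Finset.mul_sum]
      _ ≤ 4 * (2:ℝ)^(-sg) * (5 * 1 + 4) := by
          have h5 := LZT.sum_maj N
          have h6 := LZT.sum_delta m N
          have h7 : (0:ℝ) ≤ ∑ k ∈ Finset.range N, LZT.maj k :=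
            Finset.sum_nonneg (fun k _ => LZT.maj_nonneg k)
          nlinarith
      _ = 36 * (2:ℝ)^(-sg) := by ring
  have hsummableDD : Summable DD := summable_of_sum_range_le hDDnn hsumDD
  have hsummable_norm : Summable (fun k => ‖(if k = m then 0
      else ∫ t in (0:ℝ)..T, LZT.GG sg m e k t)‖) :=
    Summable.of_nonneg_of_le (fun k => norm_nonneg _) hterm hsummableDD
  have hSbound : ‖S‖ ≤ 36 * (2:ℝ)^(-sg) := by
    rw [hS]
    refine le_trans (norm_tsum_le_tsum_norm hsummable_norm) ?_
    refine le_trans (Summable.tsum_le_tsum hterm hsummable_norm hsummableDD) ?_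
    exact hsummableDD.tsum_le_of_sum_range_le hsumDD
  have hmb := LZT.mterm_bound hsg hm he T
  calc ‖((ArithmeticFunction.vonMangoldt m / ((m : ℝ) ^ sg * Real.log m) * T : ℝ) : ℂ)
        + (LZT.rr sg m : ℂ) * (e * LZT.EE (-(Real.log m + Real.log m)) T) + S
        - ((ArithmeticFunction.vonMangoldt m / ((m : ℝ) ^ sg * Real.log m) * T : ℝ) : ℂ)‖
      = ‖(LZT.rr sg m : ℂ) * (e * LZT.EE (-(Real.log m + Real.log m)) T) + S‖ := by
        congr 1; ring
    _ ≤ ‖(LZT.rr sg m : ℂ) * (e * LZT.EE (-(Real.log m + Real.log m)) T)‖ + ‖S‖ :=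
        norm_add_le _ _
    _ ≤ (3/2) * (2:ℝ)^(-sg) + 36 * (2:ℝ)^(-sg) := add_le_add hmb hSbound
    _ ≤ 1000 * (2:ℝ)^(-sg) := by nlinarith
end

section
/- For each integer n ≥ 1, define h_n : ℝ → ℝ by h_n(u) = Im{i^{n+2} e^{iu}} · ∫_0^∞ y^{n+1}/(y² + u²) · 2/(e^y + (−1)^{n+1} e^{−y}) dy. Then |h_n(u)| ≪ min{1, 1/u²} for all u ≠ 0, and h_n is even when n is odd and odd when n is even. -/
open MeasureTheory Real

/-- h_n(u) = Im{i^{n+2} e^{iu}} ∫_0^∞ y^{n+1}/(y²+u²) · 2/(e^y + (−1)^{n+1} e^{−y}) dy. -/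
noncomputable def hFun (n : ℕ) (u : ℝ) : ℝ :=
  (Complex.I ^ (n + 2) * Complex.exp (Complex.I * u)).im *
    ∫ y in Set.Ioi (0 : ℝ),
      y ^ (n + 1) / (y ^ 2 + u ^ 2) * (2 / (Real.exp y + (-1) ^ (n + 1) * Real.exp (-y)))

lemma hFun_aux_int (k : ℕ) : IntegrableOn (fun y : ℝ => y ^ k * Real.exp (-y)) (Set.Ioi 0) := by
  have h := Real.GammaIntegral_convergent (s := (k+1:ℝ)) (by positivity)
  apply h.congr_fun ?_ measurableSet_Ioi
  intro x hx
  simp only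
  rw [show ((k:ℝ)+1) - 1 = (k:ℝ) by ring, Real.rpow_natCast]
  ring

lemma hFun_negone_im (m : ℕ) : ((-1:ℂ)^m).im = 0 := by
  induction m with
  | zero => simp
  | succ m ih => rw [pow_succ]; simp [Complex.mul_im, ih]

lemma hFun_im_odd (k : ℕ) (u : ℝ) :
    (Complex.I ^ (2*k+1 + 2) * Complex.exp (Complex.I * (-u:ℝ))).im
      = (Complex.I ^ (2*k+1 + 2) * Complex.exp (Complex.I * (u:ℝ))).im := by
  rw [show 2*k+1+2 = 2*(k+1)+1 by ring, pow_succ, pow_mul, Complex.I_sq]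
  simp [Complex.exp_im, Complex.exp_re, Complex.mul_im, Complex.mul_re, hFun_negone_im]

lemma hFun_im_even (k : ℕ) (u : ℝ) :
    (Complex.I ^ (k + k + 2) * Complex.exp (Complex.I * (-u:ℝ))).im
      = -(Complex.I ^ (k + k + 2) * Complex.exp (Complex.I * (u:ℝ))).im := by
  rw [show k+k+2 = 2*(k+1) by ring, pow_mul, Complex.I_sq]
  simp [Complex.exp_im, Complex.exp_re, Complex.mul_im, Complex.mul_re, hFun_negone_im]

lemma hFun_denom_pos (n : ℕ) {y : ℝ} (hy : 0 < y) :
    0 < Real.exp y + (-1) ^ (n+1) * Real.exp (-y) := by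
  have h2 : Real.exp (-y) < Real.exp y := Real.exp_lt_exp.mpr (by linarith)
  have h3 : 0 < Real.exp (-y) := Real.exp_pos _
  rcases Nat.even_or_odd (n+1) with h | h
  · rw [h.neg_one_pow]; nlinarith
  · rw [h.neg_one_pow]; nlinarith

lemma hFun_integrand_nonneg (n : ℕ) (u : ℝ) {y : ℝ} (hy : 0 < y) :
    0 ≤ y ^ (n + 1) / (y ^ 2 + u ^ 2) * (2 / (Real.exp y + (-1) ^ (n + 1) * Real.exp (-y))) :=
  mul_nonneg (div_nonneg (pow_nonneg hy.le _) (by positivity))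
    (div_nonneg (by norm_num) (hFun_denom_pos n hy).le)

/-- |h_n(u)| ≪ min{1, 1/u²} for u ≠ 0, and h_n is even for n odd,
    odd for n even. -/
theorem hFun_properties (n : ℕ) (hn : 1 ≤ n) :
    (∃ C > 0, ∀ u : ℝ, u ≠ 0 → |hFun n u| ≤ C * min 1 (1 / u ^ 2)) ∧
    (Odd n → ∀ u : ℝ, hFun n (-u) = hFun n u) ∧
    (Even n → ∀ u : ℝ, hFun n (-u) = -hFun n u) := by
  refine ⟨?_, ?_, ?_⟩
  · -- the bound
    obtain ⟨A, hA0, B, hB0, hball⟩ : ∃ A, 0 ≤ A ∧ ∃ B, 0 ≤ B ∧ ∀ u : ℝ, u ≠ 0 →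
        (∫ y in Set.Ioi (0:ℝ), y ^ (n + 1) / (y ^ 2 + u ^ 2) *
            (2 / (Real.exp y + (-1) ^ (n + 1) * Real.exp (-y)))) ≤ A ∧
        (∫ y in Set.Ioi (0:ℝ), y ^ (n + 1) / (y ^ 2 + u ^ 2) *
            (2 / (Real.exp y + (-1) ^ (n + 1) * Real.exp (-y)))) ≤ B / u ^ 2 := by
      rcases Nat.even_or_odd n with he | ho
      · -- n even, n ≥ 2; denominator is exp y − exp (−y)
        have hn2 : 2 ≤ n := by obtain ⟨r, hr⟩ := he; omega
        have hpow : ((-1:ℝ)) ^ (n+1) = -1 := (he.add_one).neg_one_pow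
        have hkey : ∀ y : ℝ, 0 < y →
            2 / (Real.exp y - Real.exp (-y)) ≤ ((1 + 2*y) * Real.exp (-y)) / y := by
          intro y hy
          have hD : 0 < Real.exp y - Real.exp (-y) := by
            have := Real.exp_lt_exp.mpr (show -y < y by linarith); linarith
          rw [div_le_div_iff₀ hD hy]
          have h1 : 2*y + 1 ≤ Real.exp (2*y) := Real.add_one_le_exp (2*y)
          have h2 : Real.exp (-y) * (1 + 2*y) ≤ Real.exp y := by
            calc Real.exp (-y) * (1 + 2*y) ≤ Real.exp (-y) * Real.exp (2*y) :=
                  mul_le_mul_of_nonneg_left (by linarith) (Real.exp_pos _).le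
              _ = Real.exp y := by rw [← Real.exp_add]; ring_nf
          have hab : Real.exp (-y) * Real.exp y = 1 := by
            rw [← Real.exp_add]; simp
          nlinarith [Real.exp_pos (-y), Real.exp_pos y, sq_nonneg (Real.exp (-y))]
        refine ⟨∫ y in Set.Ioi (0:ℝ), (y^(n-2) * Real.exp (-y) + 2*(y^(n-1) * Real.exp (-y))),
            setIntegral_nonneg measurableSet_Ioi (fun y hy => by
              have hy' : (0:ℝ) < y := hy
              have := Real.exp_nonneg (-y)
              have h1 := pow_nonneg hy'.le (n-2)
              have h2 := pow_nonneg hy'.le (n-1)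
              nlinarith), ?_⟩
        refine ⟨∫ y in Set.Ioi (0:ℝ), (y^n * Real.exp (-y) + 2*(y^(n+1) * Real.exp (-y))),
            setIntegral_nonneg measurableSet_Ioi (fun y hy => by
              have hy' : (0:ℝ) < y := hy
              have := Real.exp_nonneg (-y)
              have h1 := pow_nonneg hy'.le n
              have h2 := pow_nonneg hy'.le (n+1)
              nlinarith), ?_⟩
        intro u hu
        have hu2 : (0:ℝ) < u ^ 2 := by positivity
        constructor
        · apply integral_mono_of_nonneg
          · filter_upwards [ae_restrict_mem measurableSet_Ioi] with y hy
            exact hFun_integrand_nonneg n u hy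
          · exact (hFun_aux_int (n-2)).add ((hFun_aux_int (n-1)).const_mul 2)
          · filter_upwards [ae_restrict_mem measurableSet_Ioi] with y hy
            have hy' : (0:ℝ) < y := hy
            have hD : 0 < Real.exp y - Real.exp (-y) := by
              have := Real.exp_lt_exp.mpr (show -y < y by linarith); linarith
            have h1 : y^(n+1)/(y^2+u^2) ≤ y^(n-1) := by
              rw [div_le_iff₀ (by positivity)]
              have hid : y^(n-1) * y^2 = y^(n+1) := by rw [← pow_add]; congr 1; omega
              nlinarith [pow_nonneg hy'.le (n-1), sq_nonneg u]
            have h2 := hkey y hy'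
            rw [hpow, neg_one_mul, ← sub_eq_add_neg]
            calc y^(n+1)/(y^2+u^2) * (2/(Real.exp y - Real.exp (-y)))
                ≤ y^(n-1) * (((1 + 2*y) * Real.exp (-y)) / y) := by
                  apply mul_le_mul h1 h2 (div_nonneg (by norm_num) hD.le) (pow_nonneg hy'.le _)
              _ = y^(n-2) * Real.exp (-y) + 2*(y^(n-1) * Real.exp (-y)) := by
                  have hid : y^(n-1) = y^(n-2) * y := by rw [← pow_succ]; congr 1; omega
                  rw [hid]; field_simp
        · have hmono : (∫ y in Set.Ioi (0:ℝ), y ^ (n + 1) / (y ^ 2 + u ^ 2) *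
              (2 / (Real.exp y + (-1) ^ (n + 1) * Real.exp (-y)))) ≤
              ∫ y in Set.Ioi (0:ℝ), (y^n * Real.exp (-y) + 2*(y^(n+1) * Real.exp (-y))) / u^2 := by
            apply integral_mono_of_nonneg
            · filter_upwards [ae_restrict_mem measurableSet_Ioi] with y hy
              exact hFun_integrand_nonneg n u hy
            · exact ((hFun_aux_int n).add ((hFun_aux_int (n+1)).const_mul 2)).div_const _
            · filter_upwards [ae_restrict_mem measurableSet_Ioi] with y hy
              have hy' : (0:ℝ) < y := hy
              have hD : 0 < Real.exp y - Real.exp (-y) := by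
                have := Real.exp_lt_exp.mpr (show -y < y by linarith); linarith
              have h1 : y^(n+1)/(y^2+u^2) ≤ y^(n+1)/u^2 := by
                apply div_le_div_of_nonneg_left (pow_nonneg hy'.le _) hu2
                nlinarith [sq_nonneg y]
              have h2 := hkey y hy'
              rw [hpow, neg_one_mul, ← sub_eq_add_neg]
              calc y^(n+1)/(y^2+u^2) * (2/(Real.exp y - Real.exp (-y)))
                  ≤ (y^(n+1)/u^2) * (((1 + 2*y) * Real.exp (-y)) / y) := by
                    apply mul_le_mul h1 h2 (div_nonneg (by norm_num) hD.le)
                      (div_nonneg (pow_nonneg hy'.le _) hu2.le)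
                _ = (y^n * Real.exp (-y) + 2*(y^(n+1) * Real.exp (-y))) / u^2 := by
                    have hid : y^(n+1) = y^n * y := by rw [← pow_succ]
                    rw [hid]; field_simp
          rwa [integral_div] at hmono
      · -- n odd; denominator is exp y + exp (−y) ≥ exp y
        have hpow : ((-1:ℝ)) ^ (n+1) = 1 := (ho.add_one).neg_one_pow
        have hkey : ∀ y : ℝ, 0 < y →
            2 / (Real.exp y + Real.exp (-y)) ≤ 2 * Real.exp (-y) := by
          intro y hy
          have hD : 0 < Real.exp y + Real.exp (-y) := by positivity
          rw [div_le_iff₀ hD]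
          have hab : Real.exp (-y) * Real.exp y = 1 := by rw [← Real.exp_add]; simp
          nlinarith [sq_nonneg (Real.exp (-y)), Real.exp_pos (-y)]
        refine ⟨∫ y in Set.Ioi (0:ℝ), 2*(y^(n-1) * Real.exp (-y)),
            setIntegral_nonneg measurableSet_Ioi (fun y hy => by
              have hy' : (0:ℝ) < y := hy
              have := Real.exp_nonneg (-y)
              have h1 := pow_nonneg hy'.le (n-1)
              nlinarith), ?_⟩
        refine ⟨∫ y in Set.Ioi (0:ℝ), 2*(y^(n+1) * Real.exp (-y)),
            setIntegral_nonneg measurableSet_Ioi (fun y hy => by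
              have hy' : (0:ℝ) < y := hy
              have := Real.exp_nonneg (-y)
              have h1 := pow_nonneg hy'.le (n+1)
              nlinarith), ?_⟩
        intro u hu
        have hu2 : (0:ℝ) < u ^ 2 := by positivity
        constructor
        · apply integral_mono_of_nonneg
          · filter_upwards [ae_restrict_mem measurableSet_Ioi] with y hy
            exact hFun_integrand_nonneg n u hy
          · exact (hFun_aux_int (n-1)).const_mul 2
          · filter_upwards [ae_restrict_mem measurableSet_Ioi] with y hy
            have hy' : (0:ℝ) < y := hy
            have hD : 0 < Real.exp y + Real.exp (-y) := by positivity
            have h1 : y^(n+1)/(y^2+u^2) ≤ y^(n-1) := by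
              rw [div_le_iff₀ (by positivity)]
              have hid : y^(n-1) * y^2 = y^(n+1) := by rw [← pow_add]; congr 1; omega
              nlinarith [pow_nonneg hy'.le (n-1), sq_nonneg u]
            have h2 := hkey y hy'
            rw [hpow, one_mul]
            calc y^(n+1)/(y^2+u^2) * (2/(Real.exp y + Real.exp (-y)))
                ≤ y^(n-1) * (2 * Real.exp (-y)) :=
                  mul_le_mul h1 h2 (div_nonneg (by norm_num) hD.le) (pow_nonneg hy'.le _)
              _ = 2*(y^(n-1) * Real.exp (-y)) := by ring
        · have hmono : (∫ y in Set.Ioi (0:ℝ), y ^ (n + 1) / (y ^ 2 + u ^ 2) *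
              (2 / (Real.exp y + (-1) ^ (n + 1) * Real.exp (-y)))) ≤
              ∫ y in Set.Ioi (0:ℝ), (2*(y^(n+1) * Real.exp (-y))) / u^2 := by
            apply integral_mono_of_nonneg
            · filter_upwards [ae_restrict_mem measurableSet_Ioi] with y hy
              exact hFun_integrand_nonneg n u hy
            · exact ((hFun_aux_int (n+1)).const_mul 2).div_const _
            · filter_upwards [ae_restrict_mem measurableSet_Ioi] with y hy
              have hy' : (0:ℝ) < y := hy
              have hD : 0 < Real.exp y + Real.exp (-y) := by positivity
              have h1 : y^(n+1)/(y^2+u^2) ≤ y^(n+1)/u^2 := by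
                apply div_le_div_of_nonneg_left (pow_nonneg hy'.le _) hu2
                nlinarith [sq_nonneg y]
              have h2 := hkey y hy'
              rw [hpow, one_mul]
              calc y^(n+1)/(y^2+u^2) * (2/(Real.exp y + Real.exp (-y)))
                  ≤ (y^(n+1)/u^2) * (2 * Real.exp (-y)) :=
                    mul_le_mul h1 h2 (div_nonneg (by norm_num) hD.le)
                      (div_nonneg (pow_nonneg hy'.le _) hu2.le)
                _ = (2*(y^(n+1) * Real.exp (-y))) / u^2 := by ring
          rwa [integral_div] at hmono
    refine ⟨max A B + 1, by positivity, ?_⟩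
    intro u hu
    obtain ⟨h1, h2⟩ := hball u hu
    have hu2 : (0:ℝ) < u ^ 2 := by positivity
    have hInn : 0 ≤ ∫ y in Set.Ioi (0:ℝ), y ^ (n + 1) / (y ^ 2 + u ^ 2) *
        (2 / (Real.exp y + (-1) ^ (n + 1) * Real.exp (-y))) :=
      setIntegral_nonneg measurableSet_Ioi (fun y hy => hFun_integrand_nonneg n u hy)
    have htrig : |(Complex.I ^ (n + 2) * Complex.exp (Complex.I * u)).im| ≤ 1 := by
      calc |(Complex.I ^ (n + 2) * Complex.exp (Complex.I * u)).im|
          ≤ ‖Complex.I ^ (n + 2) * Complex.exp (Complex.I * u)‖ :=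
            Complex.abs_im_le_norm _
        _ = 1 := by simp [Complex.norm_exp]
    have hstep : |hFun n u| ≤ ∫ y in Set.Ioi (0:ℝ), y ^ (n + 1) / (y ^ 2 + u ^ 2) *
        (2 / (Real.exp y + (-1) ^ (n + 1) * Real.exp (-y))) := by
      rw [hFun, abs_mul, abs_of_nonneg hInn]
      calc |(Complex.I ^ (n + 2) * Complex.exp (Complex.I * u)).im| *
            (∫ y in Set.Ioi (0:ℝ), y ^ (n + 1) / (y ^ 2 + u ^ 2) *
              (2 / (Real.exp y + (-1) ^ (n + 1) * Real.exp (-y))))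
          ≤ 1 * (∫ y in Set.Ioi (0:ℝ), y ^ (n + 1) / (y ^ 2 + u ^ 2) *
              (2 / (Real.exp y + (-1) ^ (n + 1) * Real.exp (-y)))) :=
            mul_le_mul_of_nonneg_right htrig hInn
        _ = _ := one_mul _
    set C := max A B + 1 with hC
    have hCpos : (0:ℝ) < C := by positivity
    have e1 : |hFun n u| ≤ C := le_trans hstep (le_trans h1 (by
      have : A ≤ max A B := le_max_left A B
      linarith))
    have e2 : |hFun n u| ≤ C * (1 / u ^ 2) := by
      refine le_trans hstep (le_trans h2 ?_)
      rw [div_eq_mul_one_div B (u^2)]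
      apply mul_le_mul_of_nonneg_right _ (by positivity)
      have : B ≤ max A B := le_max_right A B
      linarith
    rcases le_total (1:ℝ) (1/u^2) with h | h
    · rw [min_eq_left h, mul_one]; exact e1
    · rw [min_eq_right h]; exact e2
  · -- n odd: even function
    intro ho u
    obtain ⟨k, rfl⟩ := ho
    unfold hFun
    simp only [neg_sq]
    congr 1
    exact hFun_im_odd k u
  · -- n even: odd function
    intro he u
    obtain ⟨k, hk⟩ := he
    subst hk
    unfold hFun
    simp only [neg_sq]
    rw [hFun_im_even k u, neg_mul]
end
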